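/- arXiv:1704.02800 — 5 statements merged into one kernel-verified Lean document; each statement's English description precedes it below -/
import Mathlib

section
/- For each (d+1)-colored graph (Γ,γ) of order 2p (d ≥ 3), ω_G(Γ) = ((d−1)!/2)·( p + d − Σ_{i∈Δ_d} g_{î} ) + Σ_{i∈Δ_d} ω_G(Γ_{î}), where for each i ∈ Δ_d, ω_G(Γ_{î}) denotes the sum of the G-degrees of the connected components of the d-colored graph Γ_{î}. -/
/-!
Basic framework: edge-colored graphs à la crystallization theory.

A `(d+1)`-colored graph (finite connected multigraph, regular of degree `d+1`, with a proper
edge-coloring by the color set `C`, `#C = d+1`) is encoded by giving, for each color `c`,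
the perfect matching formed by the `c`-colored edges, i.e. a fixed-point-free involution
`inv c` on the vertex set `V` (connectedness is the separate predicate `Conn`).
-/

structure CGraph (C V : Type) where
  inv : C → V → V
  invol : ∀ c v, inv c (inv c v) = v
  no_fixed : ∀ c v, inv c v ≠ v

namespace CGraph

variable {C V : Type}

/-- `g G B` = number of connected components of the spanning subgraph `Γ_B` consisting of
the edges whose color lies in `B`. -/
noncomputable def g (G : CGraph C V) (B : Set C) : ℕ :=
  Nat.card (Quotient (Relation.EqvGen.setoid (fun v w : V => ∃ c ∈ B, G.inv c v = w)))

/-- connectedness of the colored graph -/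
def Conn (G : CGraph C V) : Prop := G.g Set.univ = 1

/-- the spanning subgraph `Γ_B` of edges colored in `B`, as a colored graph with color set `B` -/
def restrict (G : CGraph C V) (B : Set C) : CGraph B V where
  inv c v := G.inv c.val v
  invol c v := G.invol c.val v
  no_fixed c v := G.no_fixed c.val v

/-- reachability in the colored graph -/
def reach (G : CGraph C V) : V → V → Prop :=
  Relation.EqvGen (fun v w : V => ∃ c, G.inv c v = w)

/-- the connected component of `G` containing `v0`, as a colored graph on the vertices
reachable from `v0` -/
def component (G : CGraph C V) (v0 : V) : CGraph C {w : V // G.reach v0 w} where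
  inv c w := ⟨G.inv c w.val,
    Relation.EqvGen.trans _ _ _ w.property (Relation.EqvGen.rel _ _ ⟨c, rfl⟩)⟩
  invol c w := Subtype.ext (G.invol c w.val)
  no_fixed c w h := G.no_fixed c w.val (congrArg Subtype.val h)

/-- A cyclic permutation of the (finite) color set: a permutation consisting of a single cycle
through all the colors.  Cyclic permutations `ε = (ε_0, …, ε_d)` of the color set, up to
rotation, correspond bijectively to such permutations `σ` (via `σ : ε_j ↦ ε_{j+1}`), and
taking the inverse cyclic permutation corresponds to `σ ↦ σ⁻¹`. -/
def IsCyclicPerm (σ : Equiv.Perm C) : Prop := σ.IsCycle ∧ ∀ c, σ c ≠ c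

/-- Euler characteristic `χ_σ(Γ) = Σ_{j} g_{ε_j ε_{j+1}} + (1-(n-1))·p` of the surface of the
regular embedding associated with the cyclic permutation `σ`; here `n = #C`, the graph has
order `2p` (i.e. `p = (#V)/2`), and the consecutive pairs `{ε_j, ε_{j+1}}` are exactly the
pairs `{c, σ c}`, `c ∈ C`. -/
noncomputable def chi (G : CGraph C V) (σ : Equiv.Perm C) : ℚ :=
  (∑ᶠ c : C, (G.g {c, σ c} : ℚ)) +
    (2 - (Nat.card C : ℚ)) * ((Nat.card V : ℚ) / 2)

/-- the genus `ρ_σ` of the regular embedding associated with `σ`: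
for a connected graph it is `(2 - χ_σ)/2`; in general (`g G Set.univ` connected components)
it is the sum of the genera of the connected components, matching the convention that the
genus/G-degree of a disconnected colored graph is the sum over its connected components. -/
noncomputable def rho (G : CGraph C V) (σ : Equiv.Perm C) : ℚ :=
  (2 * (G.g Set.univ : ℚ) - G.chi σ) / 2

/-- the Gurau degree `ω_G(Γ) = Σ ρ_ε(Γ)`, the sum over the cyclic permutations of the color
set up to inverse; each class `{σ, σ⁻¹}` has `ρ_σ = ρ_{σ⁻¹}`, whence the division by `2`. -/
noncomputable def omegaG (G : CGraph C V) : ℚ :=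
  (∑ᶠ σ : {σ : Equiv.Perm C // IsCyclicPerm σ}, G.rho σ.val) / 2

/-- bipartiteness -/
def Bipartite (G : CGraph C V) : Prop := ∃ f : V → Bool, ∀ c v, f (G.inv c v) ≠ f v

/-- color-preserving isomorphism of colored graphs -/
def IsIso {V' : Type} (G : CGraph C V) (G' : CGraph C V') : Prop :=
  ∃ e : V ≃ V', ∀ c v, e (G.inv c v) = G'.inv c (e v)

end CGraph

section CycCount

open Equiv Equiv.Perm Finset

set_option linter.unusedSectionVars false

noncomputable instance {α : Type} [Finite α] : Fintype {σ : Equiv.Perm α // CGraph.IsCyclicPerm σ} :=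
  Fintype.ofFinite _

noncomputable instance {α : Type} [Finite α] (c c' : α) :
    Fintype {σ : Equiv.Perm α // CGraph.IsCyclicPerm σ ∧ σ c = c'} := Fintype.ofFinite _

variable {α : Type} [Fintype α] [DecidableEq α]
lemma CGraph.IsCyclicPerm.support_eq {σ : Perm α} (h : CGraph.IsCyclicPerm σ) : σ.support = Finset.univ := by
  ext x; simp [Equiv.Perm.mem_support, h.2 x]

lemma CGraph.IsCyclicPerm.conj {σ : Perm α} (π : Perm α) (h : CGraph.IsCyclicPerm σ) : CGraph.IsCyclicPerm (π * σ * π⁻¹) := by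
  refine ⟨h.1.conj, fun x hx => ?_⟩
  have hx' : σ (π⁻¹ x) = π⁻¹ x := by
    have := congrArg (fun y => π⁻¹ y) hx
    simpa [Equiv.Perm.mul_apply] using this
  exact h.2 _ hx'

lemma exists_isCyclicPerm (h2 : 2 ≤ Fintype.card α) : ∃ σ : Equiv.Perm α, CGraph.IsCyclicPerm σ := by
  have hlen : (Finset.univ : Finset α).toList.length = Fintype.card α := by
    simp [Finset.length_toList]
  have hne : ∀ x : α, (Finset.univ : Finset α).toList ≠ [x] := by
    intro x h
    rw [h] at hlen
    simp at hlen
    omega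
  have hsupp : ((Finset.univ : Finset α).toList.formPerm).support
      = (Finset.univ : Finset α).toList.toFinset :=
    List.support_formPerm_of_nodup _ (Finset.nodup_toList _) hne
  refine ⟨(Finset.univ : Finset α).toList.formPerm, ?_, fun x => ?_⟩
  · exact List.isCycle_formPerm (Finset.nodup_toList _) (by omega)
  · have : x ∈ ((Finset.univ : Finset α).toList.formPerm).support := by
      rw [hsupp]
      simp [Finset.mem_toList]
    exact Equiv.Perm.mem_support.mp this

lemma commute_iff_zpowers {σ : Perm α} (h : CGraph.IsCyclicPerm σ) (g : Perm α) :
    Commute g σ ↔ g ∈ Subgroup.zpowers σ := by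
  constructor
  · intro hc
    have hapos : 0 < Fintype.card α := by
      by_contra h0
      have : IsEmpty α := by
        rw [← Fintype.card_eq_zero_iff]; omega
      exact h.1.ne_one (Subsingleton.elim _ _)
    obtain ⟨a⟩ := Fintype.card_pos_iff.mp hapos
    obtain ⟨k, hk⟩ := h.1.sameCycle (h.2 a) (h.2 (g a))
    refine Subgroup.mem_zpowers_iff.mpr ⟨k, ?_⟩
    ext x
    obtain ⟨j, hj⟩ := h.1.sameCycle (h.2 a) (h.2 x)
    have hcj : g * σ ^ j = σ ^ j * g := (hc.zpow_right j).eq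
    calc (σ ^ k) x = (σ ^ k) ((σ ^ j) a) := by rw [hj]
    _ = (σ ^ j) ((σ ^ k) a) := by
        rw [← Equiv.Perm.mul_apply, ← Equiv.Perm.mul_apply, ← zpow_add, ← zpow_add, add_comm]
    _ = (σ ^ j) (g a) := by rw [hk]
    _ = g ((σ ^ j) a) := by
        rw [← Equiv.Perm.mul_apply, ← hcj, Equiv.Perm.mul_apply]
    _ = g x := by rw [hj]
  · rintro ⟨k, rfl⟩
    exact (Commute.refl σ).zpow_left k

lemma card_isCyclicPerm (h2 : 2 ≤ Fintype.card α) :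
    Nat.card {σ : Equiv.Perm α // CGraph.IsCyclicPerm σ} = (Fintype.card α - 1).factorial := by
  obtain ⟨σ₀, h₀⟩ := exists_isCyclicPerm h2
  -- orbit = set of cyclic perms
  have horb : MulAction.orbit (ConjAct (Perm α)) σ₀ = {σ : Perm α | CGraph.IsCyclicPerm σ} := by
    ext σ
    rw [ConjAct.mem_orbit_conjAct]
    constructor
    · intro hc
      obtain ⟨c, hc⟩ := isConj_iff.mp hc.symm
      rw [← hc]
      exact h₀.conj c
    · intro hσ
      exact hσ.1.isConj h₀.1 (by rw [hσ.support_eq, h₀.support_eq])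
  have hstab : Nat.card (MulAction.stabilizer (ConjAct (Perm α)) σ₀) = Fintype.card α := by
    have e1 : MulAction.stabilizer (ConjAct (Perm α)) σ₀ ≃
        {g : Perm α // Commute g σ₀} := by
      refine Equiv.subtypeEquiv (ConjAct.ofConjAct (G := Perm α)).toEquiv (fun g => ?_)
      rw [MulAction.mem_stabilizer_iff, ConjAct.smul_def, mul_inv_eq_iff_eq_mul,
        commute_iff_eq]
      rfl
    have e2 : {g : Perm α // Commute g σ₀} ≃ Subgroup.zpowers σ₀ := by
      refine Equiv.subtypeEquiv (Equiv.refl _) (fun g => ?_)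
      simpa using commute_iff_zpowers h₀ g
    rw [Nat.card_congr (e1.trans e2), Nat.card_zpowers, h₀.1.orderOf, h₀.support_eq,
      Finset.card_univ]
  have hos : Nat.card (MulAction.orbit (ConjAct (Perm α)) σ₀) *
      Nat.card (MulAction.stabilizer (ConjAct (Perm α)) σ₀) = (Fintype.card α).factorial := by
    rw [← Nat.card_prod,
      Nat.card_congr (MulAction.orbitProdStabilizerEquivGroup (ConjAct (Perm α)) σ₀),
      Nat.card_congr (ConjAct.ofConjAct (G := Perm α)).toEquiv,
      Nat.card_eq_fintype_card, Fintype.card_perm]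
  rw [hstab] at hos
  have hcard : Nat.card {σ : Equiv.Perm α // CGraph.IsCyclicPerm σ}
      = Nat.card (MulAction.orbit (ConjAct (Perm α)) σ₀) := by
    rw [horb]; rfl
  rw [hcard]
  have hfac : (Fintype.card α).factorial
      = (Fintype.card α - 1).factorial * Fintype.card α := by
    obtain ⟨k, hk⟩ : ∃ k, Fintype.card α = k + 1 := ⟨Fintype.card α - 1, by omega⟩
    rw [hk]
    simp [Nat.factorial_succ, mul_comm]
  rw [hfac] at hos
  exact Nat.eq_of_mul_eq_mul_right (by omega) hos

def sigmaFiberEquivCyc (c : α) :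
    {σ : Equiv.Perm α // CGraph.IsCyclicPerm σ} ≃ Σ c' : α, {σ : Equiv.Perm α // CGraph.IsCyclicPerm σ ∧ σ c = c'} where
  toFun σ := ⟨σ.1 c, σ.1, σ.2, rfl⟩
  invFun x := ⟨x.2.1, x.2.2.1⟩
  left_inv σ := rfl
  right_inv := by rintro ⟨c', σ, hσ, rfl⟩; rfl

noncomputable def fiberConjEquiv (c : α) (c' c'' : α) (hc' : c' ≠ c) (hc'' : c'' ≠ c) :
    {σ : Equiv.Perm α // CGraph.IsCyclicPerm σ ∧ σ c = c'} ≃ {σ : Equiv.Perm α // CGraph.IsCyclicPerm σ ∧ σ c = c''} where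
  toFun σ := ⟨Equiv.swap c' c'' * σ.1 * (Equiv.swap c' c'')⁻¹, σ.2.1.conj _, by
    have h1 : (Equiv.swap c' c'')⁻¹ c = c := by
      rw [Equiv.swap_inv]; exact Equiv.swap_apply_of_ne_of_ne hc'.symm hc''.symm
    show (Equiv.swap c' c'') (σ.1 ((Equiv.swap c' c'')⁻¹ c)) = c''
    rw [h1, σ.2.2, Equiv.swap_apply_left]⟩
  invFun σ := ⟨Equiv.swap c' c'' * σ.1 * (Equiv.swap c' c'')⁻¹, σ.2.1.conj _, by
    have h1 : (Equiv.swap c' c'')⁻¹ c = c := by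
      rw [Equiv.swap_inv]; exact Equiv.swap_apply_of_ne_of_ne hc'.symm hc''.symm
    show (Equiv.swap c' c'') (σ.1 ((Equiv.swap c' c'')⁻¹ c)) = c'
    rw [h1, σ.2.2, Equiv.swap_apply_right]⟩
  left_inv σ := by
    ext x
    simp [Equiv.Perm.mul_apply, Equiv.swap_inv, Equiv.swap_apply_self]
  right_inv σ := by
    ext x
    simp [Equiv.Perm.mul_apply, Equiv.swap_inv, Equiv.swap_apply_self]

lemma card_fiber_cyc (h2 : 2 ≤ Fintype.card α) {c c' : α} (h : c' ≠ c) :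
    Nat.card {σ : Equiv.Perm α // CGraph.IsCyclicPerm σ ∧ σ c = c'} = (Fintype.card α - 2).factorial := by
  classical
  have htot : ∑ c'' : α, Nat.card {σ : Equiv.Perm α // CGraph.IsCyclicPerm σ ∧ σ c = c''}
      = (Fintype.card α - 1).factorial := by
    rw [← card_isCyclicPerm h2, Nat.card_congr (sigmaFiberEquivCyc c)]
    simp only [Nat.card_eq_fintype_card]
    rw [Fintype.card_sigma]
  have hzero : Nat.card {σ : Equiv.Perm α // CGraph.IsCyclicPerm σ ∧ σ c = c} = 0 := by
    have : IsEmpty {σ : Equiv.Perm α // CGraph.IsCyclicPerm σ ∧ σ c = c} :=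
      ⟨fun σ => σ.2.1.2 c σ.2.2⟩
    simp
  have hconst : ∀ c'' : α, c'' ≠ c →
      Nat.card {σ : Equiv.Perm α // CGraph.IsCyclicPerm σ ∧ σ c = c''}
        = Nat.card {σ : Equiv.Perm α // CGraph.IsCyclicPerm σ ∧ σ c = c'} := by
    intro c'' hc''
    exact Nat.card_congr (fiberConjEquiv c c'' c' hc'' h)
  rw [← Finset.sum_erase_add _ _ (Finset.mem_univ c), hzero, add_zero] at htot
  rw [Finset.sum_congr rfl (fun c'' hc'' =>
    hconst c'' (Finset.ne_of_mem_erase hc''))] at htot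
  rw [Finset.sum_const, Finset.card_erase_of_mem (Finset.mem_univ c), Finset.card_univ,
    smul_eq_mul] at htot
  have hfac : (Fintype.card α - 1).factorial
      = (Fintype.card α - 1) * (Fintype.card α - 2).factorial := by
    obtain ⟨k, hk⟩ : ∃ k, Fintype.card α = k + 2 := ⟨Fintype.card α - 2, by omega⟩
    simp [hk, Nat.factorial_succ]
  rw [hfac] at htot
  exact Nat.eq_of_mul_eq_mul_left (by omega) htot

lemma sum_cyc (h2 : 2 ≤ Fintype.card α) (h : α → α → ℚ) :
    ∑ σ : {σ : Equiv.Perm α // CGraph.IsCyclicPerm σ}, ∑ c : α, h c (σ.1 c)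
      = ((Fintype.card α - 2).factorial : ℚ) *
        ∑ c : α, ∑ c' : α, (if c' = c then 0 else h c c') := by
  classical
  rw [Finset.sum_comm, Finset.mul_sum]
  apply Finset.sum_congr rfl
  intro c _
  calc ∑ σ : {σ : Equiv.Perm α // CGraph.IsCyclicPerm σ}, h c (σ.1 c)
      = ∑ x : Σ c' : α, {σ : Equiv.Perm α // CGraph.IsCyclicPerm σ ∧ σ c = c'}, h c x.1 := by
        rw [← Equiv.sum_comp (sigmaFiberEquivCyc c) (fun x => h c x.1)]
        rfl
    _ = ∑ c' : α, ∑ _σ : {σ : Equiv.Perm α // CGraph.IsCyclicPerm σ ∧ σ c = c'}, h c c' := by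
        rw [← Finset.univ_sigma_univ, Finset.sum_sigma]
    _ = ∑ c' : α, (if c' = c then 0 else h c c' * ((Fintype.card α - 2).factorial : ℚ)) := by
        refine Finset.sum_congr rfl (fun c' _ => ?_)
        rw [Finset.sum_const, Finset.card_univ, nsmul_eq_mul, ← Nat.card_eq_fintype_card]
        by_cases hc' : c' = c
        · subst hc'
          have : IsEmpty {σ : Equiv.Perm α // CGraph.IsCyclicPerm σ ∧ σ c' = c'} :=
            ⟨fun σ => σ.2.1.2 c' σ.2.2⟩
          simp
        · rw [card_fiber_cyc h2 hc', if_neg hc', mul_comm]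
    _ = ((Fintype.card α - 2).factorial : ℚ) * ∑ c' : α, (if c' = c then 0 else h c c') := by
        rw [Finset.mul_sum]
        refine Finset.sum_congr rfl (fun c' _ => ?_)
        by_cases hc' : c' = c <;> simp [hc', mul_comm]

end CycCount

section GLemmas

open CGraph

set_option linter.unusedSectionVars false

lemma CGraph.g_restrict {C V : Type} (G : CGraph C V) (B : Set C) (A : Set ↥B) :
    (G.restrict B).g A = G.g (Subtype.val '' A) := by
  have h : (fun v w : V => ∃ c ∈ A, G.inv (c : C) v = w)
      = (fun v w : V => ∃ c ∈ Subtype.val '' A, G.inv c v = w) := by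
    funext v w
    apply propext
    constructor
    · rintro ⟨c, hc, hw⟩; exact ⟨c.1, ⟨c, hc, rfl⟩, hw⟩
    · rintro ⟨x, ⟨c, hc, rfl⟩, hw⟩; exact ⟨c, hc, hw⟩
  exact congrArg (fun r => Nat.card (Quotient (Relation.EqvGen.setoid r))) h

lemma CGraph.g_restrict_univ {C V : Type} (G : CGraph C V) (B : Set C) :
    (G.restrict B).g Set.univ = G.g B := by
  rw [CGraph.g_restrict, Set.image_univ, Subtype.range_val]

lemma CGraph.g_restrict_pair {C V : Type} (G : CGraph C V) (B : Set C) (c c' : ↥B) :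
    (G.restrict B).g {c, c'} = G.g {(c : C), (c' : C)} := by
  rw [CGraph.g_restrict, Set.image_pair]

lemma CGraph.omega_eq {C V : Type} [Fintype C] [DecidableEq C] [Finite V] (G : CGraph C V)
    (h2 : 2 ≤ Fintype.card C) :
    G.omegaG = ((Nat.card {σ : Equiv.Perm C // CGraph.IsCyclicPerm σ} : ℚ) *
        (2 * (G.g Set.univ : ℚ) - (2 - (Fintype.card C : ℚ)) * ((Nat.card V : ℚ) / 2))
      - ((Fintype.card C - 2).factorial : ℚ) *
        ∑ c : C, ∑ c' : C, (if c' = c then 0 else (G.g {c, c'} : ℚ))) / 4 := by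
  unfold CGraph.omegaG
  rw [finsum_eq_sum_of_fintype]
  have e1 : ∀ σ : {σ : Equiv.Perm C // CGraph.IsCyclicPerm σ},
      G.rho σ.1 = (2 * (G.g Set.univ : ℚ)
          - (2 - (Fintype.card C : ℚ)) * ((Nat.card V : ℚ) / 2)) / 2
        - (∑ c : C, (G.g {c, σ.1 c} : ℚ)) / 2 := by
    intro σ
    unfold CGraph.rho CGraph.chi
    rw [finsum_eq_sum_of_fintype, Nat.card_eq_fintype_card (α := C)]
    ring
  rw [Finset.sum_congr rfl (fun σ _ => e1 σ), Finset.sum_sub_distrib, Finset.sum_const,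
    Finset.card_univ, ← Nat.card_eq_fintype_card
      (α := {σ : Equiv.Perm C // CGraph.IsCyclicPerm σ}),
    ← Finset.sum_div, sum_cyc h2 (fun c c' => (G.g {c, c'} : ℚ))]
  push_cast
  ring

end GLemmas

open CGraph in
/-- Gurau–Ryan formula, Lemma `Gurau-Ryan`: for every `(d+1)`-colored graph
of order `2p` (`d ≥ 3`),
`ω_G(Γ) = ((d−1)!/2)·(p + d − Σ_i g_î) + Σ_i ω_G(Γ_î)`,
where `ω_G(Γ_î)` is the G-degree of the (possibly disconnected) `d`-colored graph `Γ_î`,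
i.e. the sum of the G-degrees of its connected components. -/
theorem stmt4 {d p : ℕ} (hd : 3 ≤ d) {V : Type} [Finite V]
    (G : CGraph (Fin (d + 1)) V) (hconn : G.Conn) (horder : Nat.card V = 2 * p) :
    G.omegaG = ((d - 1).factorial : ℚ) / 2 *
        ((p : ℚ) + (d : ℚ) - ∑ i : Fin (d + 1), (G.g {c | c ≠ i} : ℚ)) +
      ∑ i : Fin (d + 1), (G.restrict {c | c ≠ i}).omegaG := by
  classical
  obtain ⟨m, rfl⟩ : ∃ m, d = m + 3 := ⟨d - 3, by omega⟩
  have hcardC : Fintype.card (Fin (m + 3 + 1)) = m + 3 + 1 := Fintype.card_fin _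
  have h2big : 2 ≤ Fintype.card (Fin (m + 3 + 1)) := by rw [hcardC]; omega
  have hgU : G.g Set.univ = 1 := hconn
  -- the ambient graph
  have hNbig : Nat.card {σ : Equiv.Perm (Fin (m + 3 + 1)) // CGraph.IsCyclicPerm σ}
      = (m + 2 + 1).factorial := by
    rw [card_isCyclicPerm h2big, hcardC, show m + 3 + 1 - 1 = m + 2 + 1 from by omega]
  have hbig := CGraph.omega_eq G h2big
  rw [hNbig, hcardC, show m + 3 + 1 - 2 = m + 1 + 1 from by omega, hgU, horder] at hbig
  -- conversion of the restricted double sums to sums with indicators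
  have hSi : ∀ i : Fin (m + 3 + 1),
      (∑ c : ↥{c : Fin (m + 3 + 1) | c ≠ i}, ∑ c' : ↥{c : Fin (m + 3 + 1) | c ≠ i},
        (if c' = c then 0
          else ((G.restrict {c : Fin (m + 3 + 1) | c ≠ i}).g {c, c'} : ℚ)))
      = ∑ c : Fin (m + 3 + 1), ∑ c' : Fin (m + 3 + 1),
          (if c ≠ i ∧ c' ≠ i ∧ c' ≠ c then (G.g {c, c'} : ℚ) else 0) := by
    intro i
    simp only [CGraph.g_restrict_pair, Subtype.ext_iff]
    calc (∑ c : ↥{c : Fin (m + 3 + 1) | c ≠ i}, ∑ c' : ↥{c : Fin (m + 3 + 1) | c ≠ i},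
        (if (c' : Fin (m + 3 + 1)) = (c : Fin (m + 3 + 1)) then 0
          else (G.g {(c : Fin (m + 3 + 1)), (c' : Fin (m + 3 + 1))} : ℚ)))
        = ∑ c ∈ Finset.univ.filter (fun c : Fin (m + 3 + 1) => c ≠ i),
            ∑ c' : ↥{c : Fin (m + 3 + 1) | c ≠ i},
            (if (c' : Fin (m + 3 + 1)) = c then 0
              else (G.g {c, (c' : Fin (m + 3 + 1))} : ℚ)) :=
          (Finset.sum_subtype (Finset.univ.filter (fun c : Fin (m + 3 + 1) => c ≠ i))
            (fun x => by simp)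
            (fun c : Fin (m + 3 + 1) => ∑ c' : ↥{c : Fin (m + 3 + 1) | c ≠ i},
              (if (c' : Fin (m + 3 + 1)) = c then 0
                else (G.g {c, (c' : Fin (m + 3 + 1))} : ℚ)))).symm
      _ = ∑ c ∈ Finset.univ.filter (fun c : Fin (m + 3 + 1) => c ≠ i),
            ∑ c' ∈ Finset.univ.filter (fun c' : Fin (m + 3 + 1) => c' ≠ i),
            (if c' = c then 0 else (G.g {c, c'} : ℚ)) :=
          Finset.sum_congr rfl (fun c _ =>
            (Finset.sum_subtype (Finset.univ.filter (fun c' : Fin (m + 3 + 1) => c' ≠ i))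
              (fun x => by simp)
              (fun c' : Fin (m + 3 + 1) =>
                (if c' = c then 0 else (G.g {c, c'} : ℚ)))).symm)
      _ = ∑ c : Fin (m + 3 + 1), ∑ c' : Fin (m + 3 + 1),
            (if c ≠ i ∧ c' ≠ i ∧ c' ≠ c then (G.g {c, c'} : ℚ) else 0) := by
          simp only [Finset.sum_filter]
          refine Finset.sum_congr rfl (fun c _ => ?_)
          by_cases h1 : c = i
          · simp [h1]
          · rw [if_pos h1]
            refine Finset.sum_congr rfl (fun c' _ => ?_)
            by_cases h2 : c' = i <;> by_cases h3 : c' = c <;> simp [h1, h2, h3]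
  -- the restricted graphs
  have hrest : ∀ i : Fin (m + 3 + 1), (G.restrict {c | c ≠ i}).omegaG
      = (((m + 1 + 1).factorial : ℚ) *
            (2 * (G.g {c | c ≠ i} : ℚ) - (2 - ((m + 3 : ℕ) : ℚ)) * (((2 * p : ℕ) : ℚ) / 2))
          - ((m + 1).factorial : ℚ) * ∑ c : Fin (m + 3 + 1), ∑ c' : Fin (m + 3 + 1),
              (if c ≠ i ∧ c' ≠ i ∧ c' ≠ c then (G.g {c, c'} : ℚ) else 0)) / 4 := by
    intro i
    have hci : Fintype.card ↥{c : Fin (m + 3 + 1) | c ≠ i} = m + 3 := by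
      rw [Fintype.card_congr (Equiv.subtypeEquivRight (fun c => Iff.rfl) :
          ↥{c : Fin (m + 3 + 1) | c ≠ i} ≃ {c : Fin (m + 3 + 1) // ¬ c = i})]
      rw [Fintype.card_subtype_compl, Fintype.card_subtype_eq, hcardC]
      omega
    have h2i : 2 ≤ Fintype.card ↥{c : Fin (m + 3 + 1) | c ≠ i} := by rw [hci]; omega
    have hres := CGraph.omega_eq (G.restrict {c : Fin (m + 3 + 1) | c ≠ i}) h2i
    rw [card_isCyclicPerm h2i, hci, show m + 3 - 1 = m + 1 + 1 from by omega,
      show m + 3 - 2 = m + 1 from by omega, CGraph.g_restrict_univ, horder, hSi i] at hres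
    exact hres
  -- counting the indicator sums
  have hcount : ∀ (c c' : Fin (m + 3 + 1)) (x : ℚ),
      (∑ i : Fin (m + 3 + 1), if c ≠ i ∧ c' ≠ i ∧ c' ≠ c then x else 0)
        = if c' = c then 0 else ((m + 2 : ℕ) : ℚ) * x := by
    intro c c' x
    by_cases h : c' = c
    · simp [h]
    · rw [if_neg h]
      have hstep : ∀ i : Fin (m + 3 + 1),
          (if c ≠ i ∧ c' ≠ i ∧ c' ≠ c then x else 0)
            = (if c ≠ i ∧ c' ≠ i then x else 0) := by
        intro i; simp [h]
      rw [Finset.sum_congr rfl (fun i _ => hstep i), ← Finset.sum_filter,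
        Finset.sum_const, nsmul_eq_mul]
      have hfeq : Finset.univ.filter (fun j : Fin (m + 3 + 1) => c ≠ j ∧ c' ≠ j)
          = Finset.univ \ {c, c'} := by
        ext j
        simp only [Finset.mem_filter, Finset.mem_univ, true_and, Finset.mem_sdiff,
          Finset.mem_insert, Finset.mem_singleton, not_or]
        constructor
        · rintro ⟨h1, h2⟩; exact ⟨fun hh => h1 hh.symm, fun hh => h2 hh.symm⟩
        · rintro ⟨h1, h2⟩; exact ⟨fun hh => h1 hh.symm, fun hh => h2 hh.symm⟩
      rw [hfeq, Finset.card_sdiff_of_subset (fun j _ => Finset.mem_univ j), Finset.card_univ, hcardC,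
        Finset.card_pair (fun hcc : c = c' => h hcc.symm),
        show m + 3 + 1 - 2 = m + 2 from by omega]
  -- summing the indicator sums over i
  have hIndSum : (∑ i : Fin (m + 3 + 1), ∑ c : Fin (m + 3 + 1), ∑ c' : Fin (m + 3 + 1),
        (if c ≠ i ∧ c' ≠ i ∧ c' ≠ c then (G.g {c, c'} : ℚ) else 0))
      = ((m + 2 : ℕ) : ℚ) * ∑ c : Fin (m + 3 + 1), ∑ c' : Fin (m + 3 + 1),
          (if c' = c then 0 else (G.g {c, c'} : ℚ)) := by
    calc (∑ i : Fin (m + 3 + 1), ∑ c : Fin (m + 3 + 1), ∑ c' : Fin (m + 3 + 1),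
        (if c ≠ i ∧ c' ≠ i ∧ c' ≠ c then (G.g {c, c'} : ℚ) else 0))
        = ∑ c : Fin (m + 3 + 1), ∑ i : Fin (m + 3 + 1), ∑ c' : Fin (m + 3 + 1),
            (if c ≠ i ∧ c' ≠ i ∧ c' ≠ c then (G.g {c, c'} : ℚ) else 0) := Finset.sum_comm
      _ = ∑ c : Fin (m + 3 + 1), ∑ c' : Fin (m + 3 + 1), ∑ i : Fin (m + 3 + 1),
            (if c ≠ i ∧ c' ≠ i ∧ c' ≠ c then (G.g {c, c'} : ℚ) else 0) :=
          Finset.sum_congr rfl (fun c _ => Finset.sum_comm)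
      _ = ∑ c : Fin (m + 3 + 1), ∑ c' : Fin (m + 3 + 1),
            (if c' = c then 0 else ((m + 2 : ℕ) : ℚ) * (G.g {c, c'} : ℚ)) :=
          Finset.sum_congr rfl (fun c _ => Finset.sum_congr rfl (fun c' _ =>
            hcount c c' _))
      _ = ((m + 2 : ℕ) : ℚ) * ∑ c : Fin (m + 3 + 1), ∑ c' : Fin (m + 3 + 1),
            (if c' = c then 0 else (G.g {c, c'} : ℚ)) := by
          simp only [Finset.mul_sum, mul_ite, mul_zero]
  -- assembling
  rw [hbig, Finset.sum_congr rfl (fun i (_ : i ∈ Finset.univ) => hrest i), ← Finset.sum_div,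
    Finset.sum_sub_distrib, ← Finset.mul_sum, ← Finset.mul_sum, hIndSum,
    Finset.sum_sub_distrib, ← Finset.mul_sum, Finset.sum_const, Finset.card_univ, hcardC,
    nsmul_eq_mul]
  have f1 : (m + 1 + 1).factorial = (m + 1 + 1) * (m + 1).factorial := Nat.factorial_succ _
  have f2 : (m + 2 + 1).factorial = (m + 2 + 1) * ((m + 1 + 1) * (m + 1).factorial) := by
    rw [Nat.factorial_succ, show m + 2 = m + 1 + 1 from by omega, Nat.factorial_succ]
  rw [f1, f2, show m + 3 - 1 = m + 1 + 1 from by omega, f1]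
  push_cast
  ring
end

section
/- If (Γ,γ) is a 4-colored graph of order 2p, then ω_G(Γ) = p − 1 − Σ_{i∈Δ₃}(g_{î} − 1) + χ(K(Γ)), where χ(K(Γ)) = Σ_{i∈Δ₃} g_{î} − Σ_{{i,j}} g_{ij} + 2p is the Euler characteristic of the associated 3-dimensional pseudocomplex (the second sum ranging over the six unordered pairs of distinct colors in Δ₃). -/
open Equiv in
private def cycA1 : Perm (Fin 4) := List.formPerm [0,1,2,3]
open Equiv in
private def cycA2 : Perm (Fin 4) := List.formPerm [0,1,3,2]
open Equiv in
private def cycA3 : Perm (Fin 4) := List.formPerm [0,2,1,3]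
open Equiv in
private def cycA4 : Perm (Fin 4) := List.formPerm [0,3,2,1]
open Equiv in
private def cycA5 : Perm (Fin 4) := List.formPerm [0,2,3,1]
open Equiv in
private def cycA6 : Perm (Fin 4) := List.formPerm [0,3,1,2]

instance : DecidablePred (CGraph.IsCyclicPerm (C := Fin 4)) := fun s =>
  decidable_of_iff ((∃ x, s x ≠ x ∧ ∀ y, s y ≠ y → s.SameCycle x y) ∧ ∀ c, s c ≠ c) Iff.rfl

private def cycS : Finset (Equiv.Perm (Fin 4)) := {cycA1, cycA2, cycA3, cycA4, cycA5, cycA6}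

private lemma cycS_spec : ∀ s : Equiv.Perm (Fin 4), s ∈ cycS ↔ CGraph.IsCyclicPerm s := by
  decide

private lemma sum_cyclic (F : Equiv.Perm (Fin 4) → ℚ) :
    ∑ᶠ σ : {σ : Equiv.Perm (Fin 4) // CGraph.IsCyclicPerm σ}, F σ.val =
      F cycA1 + F cycA2 + F cycA3 + F cycA4 + F cycA5 + F cycA6 := by
  rw [finsum_eq_sum_of_fintype, ← Finset.sum_subtype cycS cycS_spec F]
  rw [show cycS = {cycA1, cycA2, cycA3, cycA4, cycA5, cycA6} from rfl]
  rw [Finset.sum_insert (by decide), Finset.sum_insert (by decide),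
    Finset.sum_insert (by decide), Finset.sum_insert (by decide),
    Finset.sum_insert (by decide), Finset.sum_singleton]
  ring

private lemma keylemma (f : Fin 4 → Fin 4 → ℚ) (hf : ∀ r s, f r s = f s r) :
    (∑ c : Fin 4, f c (cycA1 c)) + (∑ c : Fin 4, f c (cycA2 c)) + (∑ c : Fin 4, f c (cycA3 c)) +
    (∑ c : Fin 4, f c (cycA4 c)) + (∑ c : Fin 4, f c (cycA5 c)) + (∑ c : Fin 4, f c (cycA6 c))
    = 2 * ∑ r : Fin 4, ∑ s : Fin 4, if r = s then 0 else f r s := by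
  simp only [Fin.sum_univ_four,
    show cycA1 0 = 1 from by decide, show cycA1 1 = 2 from by decide,
    show cycA1 2 = 3 from by decide, show cycA1 3 = 0 from by decide,
    show cycA2 0 = 1 from by decide, show cycA2 1 = 3 from by decide,
    show cycA2 2 = 0 from by decide, show cycA2 3 = 2 from by decide,
    show cycA3 0 = 2 from by decide, show cycA3 1 = 3 from by decide,
    show cycA3 2 = 1 from by decide, show cycA3 3 = 0 from by decide,
    show cycA4 0 = 3 from by decide, show cycA4 1 = 0 from by decide,
    show cycA4 2 = 1 from by decide, show cycA4 3 = 2 from by decide,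
    show cycA5 0 = 2 from by decide, show cycA5 1 = 0 from by decide,
    show cycA5 2 = 3 from by decide, show cycA5 3 = 1 from by decide,
    show cycA6 0 = 3 from by decide, show cycA6 1 = 2 from by decide,
    show cycA6 2 = 0 from by decide, show cycA6 3 = 1 from by decide]
  norm_num
  simp only [show ((0:Fin 4) = 2) = False from by decide,
    show ((0:Fin 4) = 3) = False from by decide, show ((1:Fin 4) = 2) = False from by decide,
    show ((1:Fin 4) = 3) = False from by decide, show ((2:Fin 4) = 0) = False from by decide,
    show ((2:Fin 4) = 1) = False from by decide, show ((2:Fin 4) = 3) = False from by decide,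
    show ((3:Fin 4) = 0) = False from by decide, show ((3:Fin 4) = 1) = False from by decide,
    show ((3:Fin 4) = 2) = False from by decide, if_false]
  rw [hf 1 0, hf 2 0, hf 3 0, hf 2 1, hf 3 1, hf 3 2]
  ring

open CGraph in
/-- Proposition `G-degree(n=3)`, first part: for a 4-colored graph of order
`2p`, `ω_G(Γ) = p − 1 − Σ_{i∈Δ₃}(g_î − 1) + χ(K(Γ))`, where
`χ(K(Γ)) = Σ_i g_î − Σ_{{i,j}} g_{ij} + 2p` (the pair sum over the six unordered pairs of
distinct colors is written as half the sum over ordered pairs of distinct colors). -/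
theorem stmt7 {p : ℕ} {V : Type} [Finite V]
    (G : CGraph (Fin 4) V) (hconn : G.Conn) (horder : Nat.card V = 2 * p) :
    G.omegaG = (p : ℚ) - 1 - (∑ i : Fin 4, ((G.g {c | c ≠ i} : ℚ) - 1)) +
      ((∑ i : Fin 4, (G.g {c | c ≠ i} : ℚ)) -
        (∑ r : Fin 4, ∑ s : Fin 4, if r = s then 0 else (G.g {r, s} : ℚ)) / 2 +
        2 * (p : ℚ)) := by
  have hrho : ∀ σ : Equiv.Perm (Fin 4), G.rho σ =
      (2 + 2*(p:ℚ) - ∑ c : Fin 4, (G.g {c, σ c} : ℚ)) / 2 := by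
    intro σ
    rw [CGraph.Conn] at hconn
    simp only [CGraph.rho, CGraph.chi, hconn, finsum_eq_sum_of_fintype, horder,
      Nat.card_eq_fintype_card, Fintype.card_fin]
    push_cast
    ring
  have key : (∑ c : Fin 4, (G.g {c, cycA1 c} : ℚ)) + (∑ c : Fin 4, (G.g {c, cycA2 c} : ℚ)) +
      (∑ c : Fin 4, (G.g {c, cycA3 c} : ℚ)) + (∑ c : Fin 4, (G.g {c, cycA4 c} : ℚ)) +
      (∑ c : Fin 4, (G.g {c, cycA5 c} : ℚ)) + (∑ c : Fin 4, (G.g {c, cycA6 c} : ℚ))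
      = 2 * ∑ r : Fin 4, ∑ s : Fin 4, if r = s then 0 else (G.g {r, s} : ℚ) :=
    keylemma (fun r s => (G.g {r, s} : ℚ)) (fun r s => show (G.g {r, s} : ℚ) = (G.g {s, r} : ℚ) by rw [Set.pair_comm])
  rw [CGraph.omegaG, sum_cyclic G.rho, hrho cycA1, hrho cycA2, hrho cycA3, hrho cycA4,
    hrho cycA5, hrho cycA6, Finset.sum_sub_distrib]
  simp only [Finset.sum_const, Finset.card_univ, Fintype.card_fin, nsmul_eq_mul]
  linear_combination -key/4
end

section
/- For any 4-colored graph (Γ,γ), the Euler characteristic of the associated 3-pseudocomplex satisfies χ(K(Γ)) = Σ_{i∈Δ₃} ω_G(Γ_{î}), where χ(K(Γ)) = Σ_{i∈Δ₃} g_{î} − Σ_{{i,j}} g_{ij} + 2p and, for each i ∈ Δ₃, ω_G(Γ_{î}) is the sum of the G-degrees of the connected components of the 3-colored graph Γ_{î}. -/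
namespace CGraph

variable {C V : Type}

lemma g_restrict_s9 (G : CGraph C V) (B : Set C) (B' : Set B) :
    (G.restrict B).g B' = G.g (Subtype.val '' B') := by
  have h : (fun v w : V => ∃ c ∈ B', (G.restrict B).inv c v = w)
      = (fun v w : V => ∃ c ∈ Subtype.val '' B', G.inv c v = w) := by
    funext v w
    apply propext
    constructor
    · rintro ⟨c, hc, h⟩; exact ⟨c.val, ⟨c, hc, rfl⟩, h⟩
    · rintro ⟨d, ⟨c, hc, rfl⟩, h⟩; exact ⟨c, hc, h⟩
  unfold g
  rw [h]

lemma isCyclicPerm_of (σ : Equiv.Perm C) (x y z : C)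
    (hxy : x ≠ y) (hxz : x ≠ z) (hyz : y ≠ z)
    (huniv : ∀ w : C, w = x ∨ w = y ∨ w = z)
    (h1 : σ x = y) (h2 : σ y = z) (h3 : σ z = x) : IsCyclicPerm σ := by
  constructor
  · refine ⟨x, by rw [h1]; exact hxy.symm, fun w hw => ?_⟩
    rcases huniv w with rfl | rfl | rfl
    · exact Equiv.Perm.SameCycle.refl _ _
    · exact ⟨1, by simpa using h1⟩
    · refine ⟨2, ?_⟩
      have h4 : (σ ^ (2 : ℤ)) x = σ (σ x) := by rw [zpow_two]; rfl
      rw [h4, h1, h2]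
  · intro w
    rcases huniv w with rfl | rfl | rfl
    · rw [h1]; exact hxy.symm
    · rw [h2]; exact hyz.symm
    · rw [h3]; exact hxz

lemma omegaG_eq [Fintype C] [DecidableEq C] (G : CGraph C V)
    (a b c : C) (hab : a ≠ b) (hac : a ≠ c) (hbc : b ≠ c)
    (huniv : ∀ x : C, x = a ∨ x = b ∨ x = c) :
    G.omegaG = (G.g Set.univ : ℚ)
      - ((G.g {a, b} : ℚ) + (G.g {b, c} : ℚ) + (G.g {a, c} : ℚ)) / 2
      + (Nat.card V : ℚ) / 4 := by
  have hu : (Finset.univ : Finset C) = {a, b, c} := by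
    ext x
    simp only [Finset.mem_univ, true_iff, Finset.mem_insert, Finset.mem_singleton]
    exact huniv x
  have hcard : Nat.card C = 3 := by
    rw [Nat.card_eq_fintype_card, ← Finset.card_univ, hu,
      Finset.card_insert_of_notMem (by simp [hab, hac]),
      Finset.card_insert_of_notMem (by simp [hbc]), Finset.card_singleton]
  set σ₁ : Equiv.Perm C := (Equiv.swap a b).trans (Equiv.swap a c) with hσ₁def
  set σ₂ : Equiv.Perm C := (Equiv.swap a c).trans (Equiv.swap a b) with hσ₂def
  have h1a : σ₁ a = b := by
    simp [hσ₁def, Equiv.trans_apply, Equiv.swap_apply_left,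
      Equiv.swap_apply_of_ne_of_ne hab.symm hbc]
  have h1b : σ₁ b = c := by
    simp [hσ₁def, Equiv.trans_apply, Equiv.swap_apply_right, Equiv.swap_apply_left,
      Equiv.swap_apply_of_ne_of_ne hab.symm hbc]
  have h1c : σ₁ c = a := by
    simp [hσ₁def, Equiv.trans_apply, Equiv.swap_apply_right,
      Equiv.swap_apply_of_ne_of_ne hac.symm hbc.symm]
  have h2a : σ₂ a = c := by
    simp [hσ₂def, Equiv.trans_apply, Equiv.swap_apply_left,
      Equiv.swap_apply_of_ne_of_ne hac.symm hbc.symm]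
  have h2b : σ₂ b = a := by
    simp [hσ₂def, Equiv.trans_apply, Equiv.swap_apply_right, Equiv.swap_apply_left,
      Equiv.swap_apply_of_ne_of_ne hab.symm hbc]
  have h2c : σ₂ c = b := by
    simp [hσ₂def, Equiv.trans_apply, Equiv.swap_apply_right, Equiv.swap_apply_left,
      Equiv.swap_apply_of_ne_of_ne hac.symm hbc.symm]
  have hc1 : IsCyclicPerm σ₁ := isCyclicPerm_of σ₁ a b c hab hac hbc huniv h1a h1b h1c
  have hc2 : IsCyclicPerm σ₂ := isCyclicPerm_of σ₂ a c b hac hab hbc.symm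
    (fun w => by rcases huniv w with h | h | h <;> tauto) h2a h2c h2b
  have hne12 : σ₁ ≠ σ₂ := by
    intro h
    have : σ₁ a = σ₂ a := by rw [h]
    rw [h1a, h2a] at this
    exact hbc this
  have hclass : ∀ σ : Equiv.Perm C, IsCyclicPerm σ → σ = σ₁ ∨ σ = σ₂ := by
    intro σ hσ
    have hnf := hσ.2
    have hinj : Function.Injective σ := σ.injective
    rcases huniv (σ a) with h | h | h
    · exact absurd h (hnf a)
    · -- σ a = b
      left
      have hb : σ b = c := by
        rcases huniv (σ b) with h' | h' | h'
        · exfalso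
          rcases huniv (σ c) with h'' | h'' | h''
          · exact hbc (hinj (h'.trans h''.symm))
          · exact hac (hinj (h.trans h''.symm))
          · exact hnf c h''
        · exact absurd h' (hnf b)
        · exact h'
      have hc' : σ c = a := by
        rcases huniv (σ c) with h' | h' | h'
        · exact h'
        · exact absurd (hinj (h.trans h'.symm)) hac
        · exact absurd h' (hnf c)
      apply Equiv.ext
      intro x
      rcases huniv x with rfl | rfl | rfl
      · rw [h, h1a]
      · rw [hb, h1b]
      · rw [hc', h1c]
    · -- σ a = c
      right
      have hc' : σ c = b := by
        rcases huniv (σ c) with h' | h' | h'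
        · exfalso
          rcases huniv (σ b) with h'' | h'' | h''
          · exact hbc (hinj (h''.trans h'.symm))
          · exact hnf b h''
          · exact hab (hinj (h''.trans h.symm)).symm
        · exact h'
        · exact absurd h' (hnf c)
      have hb : σ b = a := by
        rcases huniv (σ b) with h' | h' | h'
        · exact h'
        · exact absurd h' (hnf b)
        · exact absurd (hinj (h.trans h'.symm)) hab
      apply Equiv.ext
      intro x
      rcases huniv x with rfl | rfl | rfl
      · rw [h, h2a]
      · rw [hb, h2b]
      · rw [hc', h2c]
  have hsetEq : {σ : Equiv.Perm C | IsCyclicPerm σ} = {σ₁, σ₂} := by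
    ext σ
    constructor
    · intro h
      rcases hclass σ h with rfl | rfl
      · exact Set.mem_insert _ _
      · exact Set.mem_insert_of_mem _ rfl
    · rintro (rfl | rfl)
      · exact hc1
      · exact hc2
  have hfin : (∑ᶠ σ : {σ : Equiv.Perm C // IsCyclicPerm σ}, G.rho σ.val)
      = G.rho σ₁ + G.rho σ₂ := by
    have e1 : (∑ᶠ σ : {σ : Equiv.Perm C // IsCyclicPerm σ}, G.rho σ.val)
        = ∑ᶠ σ ∈ {σ : Equiv.Perm C | IsCyclicPerm σ}, G.rho σ :=
      finsum_set_coe_eq_finsum_mem {σ : Equiv.Perm C | IsCyclicPerm σ}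
    rw [e1, hsetEq, finsum_mem_pair hne12]
  have hsum : ∀ σ : Equiv.Perm C, σ a = b → σ b = c → σ c = a →
      (∑ᶠ x : C, (G.g {x, σ x} : ℚ))
        = (G.g {a, b} : ℚ) + (G.g {b, c} : ℚ) + (G.g {a, c} : ℚ) := by
    intro σ ha hb hc
    rw [finsum_eq_sum_of_fintype, hu,
      Finset.sum_insert (by simp [hab, hac]),
      Finset.sum_insert (by simp [hbc]), Finset.sum_singleton, ha, hb, hc,
      Set.pair_comm c a]
    ring
  have hsum1 := hsum σ₁ h1a h1b h1c
  have hsum2 : (∑ᶠ x : C, (G.g {x, σ₂ x} : ℚ))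
      = (G.g {a, b} : ℚ) + (G.g {b, c} : ℚ) + (G.g {a, c} : ℚ) := by
    rw [finsum_eq_sum_of_fintype, hu,
      Finset.sum_insert (by simp [hab, hac]),
      Finset.sum_insert (by simp [hbc]), Finset.sum_singleton, h2a, h2b, h2c,
      Set.pair_comm b a, Set.pair_comm c b]
    ring
  have hom : G.omegaG = (G.rho σ₁ + G.rho σ₂) / 2 := by unfold omegaG; rw [hfin]
  rw [hom]
  unfold rho chi
  rw [hsum1, hsum2, hcard]
  ring

lemma omega_restrict {V : Type} [Finite V] (G : CGraph (Fin 4) V) (i x y z : Fin 4)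
    (hxy : x ≠ y) (hxz : x ≠ z) (hyz : y ≠ z)
    (hxi : x ≠ i) (hyi : y ≠ i) (hzi : z ≠ i)
    (hall : ∀ w : Fin 4, w = i ∨ w = x ∨ w = y ∨ w = z) :
    (G.restrict {c | c ≠ i}).omegaG =
      (G.g {c | c ≠ i} : ℚ)
        - ((G.g {x, y} : ℚ) + (G.g {y, z} : ℚ) + (G.g {x, z} : ℚ)) / 2
        + (Nat.card V : ℚ) / 4 := by
  haveI : Fintype ↥{c : Fin 4 | c ≠ i} := Fintype.ofFinite _
  have huniv : ∀ w : ↥{c : Fin 4 | c ≠ i},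
      w = (⟨x, hxi⟩ : ↥{c : Fin 4 | c ≠ i}) ∨ w = ⟨y, hyi⟩ ∨ w = ⟨z, hzi⟩ := by
    rintro ⟨w, hw⟩
    rcases hall w with rfl | rfl | rfl | rfl
    · exact absurd rfl hw
    · exact Or.inl rfl
    · exact Or.inr (Or.inl rfl)
    · exact Or.inr (Or.inr rfl)
  have key := omegaG_eq (G.restrict {c | c ≠ i})
    (⟨x, hxi⟩ : ↥{c : Fin 4 | c ≠ i}) ⟨y, hyi⟩ ⟨z, hzi⟩
    (fun h => hxy (congrArg Subtype.val h)) (fun h => hxz (congrArg Subtype.val h))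
    (fun h => hyz (congrArg Subtype.val h)) huniv
  rw [key, g_restrict_s9, g_restrict_s9, g_restrict_s9, g_restrict_s9]
  simp only [Set.image_univ, Subtype.range_coe, Set.image_pair]

end CGraph

open CGraph in
/-- for any 4-colored graph, the Euler characteristic of the associated
3-pseudocomplex satisfies `χ(K(Γ)) = Σ_{i∈Δ₃} ω_G(Γ_î)`, where
`χ(K(Γ)) = Σ_i g_î − Σ_{{i,j}} g_{ij} + 2p` (pair sum over the six unordered pairs of distinct
colors, written as half the ordered sum) and `ω_G(Γ_î)` is the sum of the G-degrees of the
connected components of the 3-colored graph `Γ_î`. -/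
theorem stmt9 {p : ℕ} {V : Type} [Finite V]
    (G : CGraph (Fin 4) V) (hconn : G.Conn) (horder : Nat.card V = 2 * p) :
    (∑ i : Fin 4, (G.g {c | c ≠ i} : ℚ)) -
        (∑ r : Fin 4, ∑ s : Fin 4, if r = s then 0 else (G.g {r, s} : ℚ)) / 2 +
        2 * (p : ℚ) =
      ∑ i : Fin 4, (G.restrict {c | c ≠ i}).omegaG := by
  have h0 := omega_restrict G 0 1 2 3 (by decide) (by decide) (by decide)
    (by decide) (by decide) (by decide) (by decide)
  have h1 := omega_restrict G 1 0 2 3 (by decide) (by decide) (by decide)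
    (by decide) (by decide) (by decide) (by decide)
  have h2 := omega_restrict G 2 0 1 3 (by decide) (by decide) (by decide)
    (by decide) (by decide) (by decide) (by decide)
  have h3 := omega_restrict G 3 0 1 2 (by decide) (by decide) (by decide)
    (by decide) (by decide) (by decide) (by decide)
  simp only [Fin.sum_univ_four, h0, h1, h2, h3, reduceIte,
    Set.pair_comm (1 : Fin 4) 0, Set.pair_comm (2 : Fin 4) 0, Set.pair_comm (3 : Fin 4) 0,
    Set.pair_comm (2 : Fin 4) 1, Set.pair_comm (3 : Fin 4) 1, Set.pair_comm (3 : Fin 4) 2]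
  rw [horder]
  push_cast
  ring
end

section
/- If (Γ,γ) is an order-2p crystallization of a closed 3-manifold — i.e. a 4-colored graph with g_{î} = 1 for every i ∈ Δ₃ and χ(K(Γ)) = Σ_{i∈Δ₃} g_{î} − Σ_{{i,j}} g_{ij} + 2p = 0 — then ω_G(Γ) − 3ρ(Γ) = p + 2 − 3·min{ g_{ij} : i,j ∈ Δ₃, i ≠ j }. -/
open Relation

section OrbitCount

variable {V : Type} [Finite V]

instance optFinite (α : Type) [Finite α] : Finite (Option α) :=
  Finite.of_equiv (α ⊕ PUnit) (Equiv.optionEquivSumPUnit.{0,0} α).symm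

instance quotFinite (s : Setoid V) : Finite (Quotient s) :=
  Finite.of_surjective (Quotient.mk s) Quotient.mk''_surjective

/-- number of classes of the equivalence generated by `r` -/
noncomputable def ncR (r : V → V → Prop) : ℕ :=
  Nat.card (Quotient (Relation.EqvGen.setoid r))

omit [Finite V] in
lemma eqvGen_trans' {r : V → V → Prop} (h : ∀ a b, r a b → EqvGen s a b) :
    ∀ a b, EqvGen r a b → EqvGen s a b := by
  intro a b hab
  induction hab with
  | rel a b h' => exact h a b h'
  | refl a => exact EqvGen.refl a
  | symm a b _ ih => exact EqvGen.symm a b ih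
  | trans a b c _ _ ih1 ih2 => exact EqvGen.trans a b c ih1 ih2

/-- quotient map between quotient by `r`-classes and `s`-classes when `r ≤ EqvGen s` -/
noncomputable def qmap {r s : V → V → Prop} (h : ∀ a b, r a b → EqvGen s a b) :
    Quotient (Relation.EqvGen.setoid r) → Quotient (Relation.EqvGen.setoid s) :=
  Quotient.map' id (fun a b hab => eqvGen_trans' h a b hab)

lemma qmap_mk {r s : V → V → Prop} (h : ∀ a b, r a b → EqvGen s a b) (x : V) :
    qmap h (Quotient.mk _ x) = Quotient.mk _ x := rfl

lemma qmap_surj {r s : V → V → Prop} (h : ∀ a b, r a b → EqvGen s a b) :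
    Function.Surjective (qmap h) := by
  intro q
  induction q using Quotient.ind with
  | _ x => exact ⟨Quotient.mk _ x, rfl⟩

lemma ncR_le {r s : V → V → Prop} (h : ∀ a b, r a b → EqvGen s a b) : ncR s ≤ ncR r :=
  Nat.card_le_card_of_surjective (qmap h) (qmap_surj h)

lemma ncR_congr {r s : V → V → Prop} (h1 : ∀ a b, r a b → EqvGen s a b)
    (h2 : ∀ a b, s a b → EqvGen r a b) : ncR r = ncR s :=
  le_antisymm (ncR_le h2) (ncR_le h1)

lemma ncR_le_card (r : V → V → Prop) : ncR r ≤ Nat.card V :=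
  Nat.card_le_card_of_surjective (Quotient.mk _) (Quotient.mk''_surjective)

omit [Finite V] in
lemma mkeq_iff {r : V → V → Prop} {a b : V} :
    (Quotient.mk (Relation.EqvGen.setoid r) a = Quotient.mk _ b) ↔ EqvGen r a b := by
  constructor
  · intro h; exact Quotient.exact h
  · intro h; exact Quotient.sound h

/-- the relation `r` together with one extra pair `(u,v)` -/
def padd (r : V → V → Prop) (u v : V) : V → V → Prop :=
  fun a b => r a b ∨ (a = u ∧ b = v)

omit [Finite V] in
lemma padd_cases {r : V → V → Prop} {u v : V} {a b : V}
    (h : EqvGen (padd r u v) a b) :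
    EqvGen r a b ∨ (EqvGen r a u ∧ EqvGen r v b) ∨ (EqvGen r a v ∧ EqvGen r u b) := by
  induction h with
  | rel a b h' =>
    rcases h' with h' | ⟨rfl, rfl⟩
    · exact Or.inl (EqvGen.rel _ _ h')
    · exact Or.inr (Or.inl ⟨EqvGen.refl _, EqvGen.refl _⟩)
  | refl a => exact Or.inl (EqvGen.refl a)
  | symm a b _ ih =>
    rcases ih with h | ⟨h1, h2⟩ | ⟨h1, h2⟩
    · exact Or.inl (EqvGen.symm _ _ h)
    · exact Or.inr (Or.inr ⟨EqvGen.symm _ _ h2, EqvGen.symm _ _ h1⟩)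
    · exact Or.inr (Or.inl ⟨EqvGen.symm _ _ h2, EqvGen.symm _ _ h1⟩)
  | trans a b c _ _ ih1 ih2 =>
    rcases ih1 with h | ⟨h1, h2⟩ | ⟨h1, h2⟩ <;>
      rcases ih2 with h' | ⟨h1', h2'⟩ | ⟨h1', h2'⟩
    · exact Or.inl (EqvGen.trans _ _ _ h h')
    · exact Or.inr (Or.inl ⟨EqvGen.trans _ _ _ h h1', h2'⟩)
    · exact Or.inr (Or.inr ⟨EqvGen.trans _ _ _ h h1', h2'⟩)
    · exact Or.inr (Or.inl ⟨h1, EqvGen.trans _ _ _ h2 h'⟩)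
    · -- a~u, v~b ; b~u, v~c : then v~b~u so u~v, hence a~u~v~c
      have huv : EqvGen r v u := EqvGen.trans _ _ _ h2 h1'
      exact Or.inl (EqvGen.trans _ _ _ h1 (EqvGen.trans _ _ _ (EqvGen.symm _ _ huv) h2'))
    · -- a~u, v~b ; b~v, u~c : a ~ u ~ c
      exact Or.inl (EqvGen.trans _ _ _ h1 h2')
    · exact Or.inr (Or.inr ⟨h1, EqvGen.trans _ _ _ h2 h'⟩)
    · -- a~v, u~b ; b~u, v~c: a ~ v ~ c
      exact Or.inl (EqvGen.trans _ _ _ h1 h2')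
    · -- a~v, u~b; b~v, u~c: u~b~v: so a ~ v ~ u ~ c? a~v, v~? : u~v via b
      have huv : EqvGen r u v := EqvGen.trans _ _ _ h2 h1'
      exact Or.inl (EqvGen.trans _ _ _ h1 (EqvGen.trans _ _ _ (EqvGen.symm _ _ huv) h2'))

omit [Finite V] in
lemma padd_le {r : V → V → Prop} {u v : V} :
    ∀ a b, r a b → EqvGen (padd r u v) a b :=
  fun a b h => EqvGen.rel _ _ (Or.inl h)

omit [Finite V] in
lemma padd_rel {r : V → V → Prop} (u v : V) : EqvGen (padd r u v) u v :=
  EqvGen.rel _ _ (Or.inr ⟨rfl, rfl⟩)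

lemma ncR_def (r : V → V → Prop) :
    ncR r = Nat.card (Quotient (Relation.EqvGen.setoid r)) := rfl

open Classical in
/-- adding one pair decreases the number of classes by at most 1 -/
lemma ncR_le_padd_add_one (r : V → V → Prop) (u v : V) :
    ncR r ≤ ncR (padd r u v) + 1 := by
  classical
  let J : Quotient (Relation.EqvGen.setoid r) →
      Option (Quotient (Relation.EqvGen.setoid (padd r u v))) :=
    fun q => if q = Quotient.mk _ u then none else some (qmap padd_le q)
  have hJ : Function.Injective J := by
    intro q q' h
    induction q using Quotient.ind with | _ x =>
    induction q' using Quotient.ind with | _ y =>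
    by_cases hx : Quotient.mk (Relation.EqvGen.setoid r) x = Quotient.mk _ u <;>
      by_cases hy : Quotient.mk (Relation.EqvGen.setoid r) y = Quotient.mk _ u
    · rw [hx, hy]
    · simp only [J, if_pos hx, if_neg hy] at h; exact absurd h (by simp)
    · simp only [J, if_pos hy, if_neg hx] at h; exact absurd h (by simp)
    · simp only [J, if_neg hx, if_neg hy, Option.some_inj] at h
      have hxy : EqvGen (padd r u v) x y := by
        rw [qmap_mk, qmap_mk, mkeq_iff] at h
        exact h
      rcases padd_cases hxy with h'' | ⟨h1, h2⟩ | ⟨h1, h2⟩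
      · exact Quotient.sound h''
      · exact absurd (Quotient.sound h1) hx
      · exact absurd (Quotient.sound (EqvGen.symm _ _ h2)) hy
  have := Nat.card_le_card_of_injective J hJ
  rw [Finite.card_option] at this
  exact this

open Classical in
/-- adding one pair relating two previously unrelated points decreases the count by ≥ 1 -/
lemma ncR_padd_add_one_le {r : V → V → Prop} {u v : V} (hne : ¬ EqvGen r u v) :
    ncR (padd r u v) + 1 ≤ ncR r := by
  classical
  have hsurj : Function.Surjective
      (fun s : {q : Quotient (Relation.EqvGen.setoid r) // q ≠ Quotient.mk _ u} =>
        qmap (padd_le (u := u) (v := v)) s.val) := by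
    intro q
    induction q using Quotient.ind with | _ x =>
    by_cases hx : Quotient.mk (Relation.EqvGen.setoid r) x = Quotient.mk _ u
    · refine ⟨⟨Quotient.mk _ v, ?_⟩, ?_⟩
      · intro h; rw [mkeq_iff] at h; exact hne (EqvGen.symm _ _ h)
      · show Quotient.mk (Relation.EqvGen.setoid (padd r u v)) v = Quotient.mk _ x
        rw [mkeq_iff] at hx ⊢
        exact EqvGen.trans _ _ _ (EqvGen.symm _ _ (padd_rel u v))
          (EqvGen.symm _ _ (eqvGen_trans' padd_le _ _ hx))
    · exact ⟨⟨Quotient.mk _ x, hx⟩, rfl⟩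
  have h1 : ncR (padd r u v) ≤
      Nat.card {q : Quotient (Relation.EqvGen.setoid r) // q ≠ Quotient.mk _ u} :=
    Nat.card_le_card_of_surjective _ hsurj
  have h2 : ncR r =
      Nat.card {q : Quotient (Relation.EqvGen.setoid r) // q ≠ Quotient.mk _ u} + 1 := by
    rw [ncR_def, ← Nat.card_congr (Equiv.optionSubtypeNe (Quotient.mk _ u)),
      Finite.card_option]
  omega

end OrbitCount

section PermLayer

open Equiv Relation

variable {V : Type} [Finite V] [DecidableEq V]

/-- step relation of a permutation -/
def Rp (σ : Equiv.Perm V) : V → V → Prop := fun a b => σ a = b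

/-- number of cycles (orbits) of a permutation, fixed points included -/
noncomputable def cyc (σ : Equiv.Perm V) : ℕ := ncR (Rp σ)

omit [Finite V] in
lemma eqvGen_one {a b : V} (h : EqvGen (Rp (1 : Equiv.Perm V)) a b) : a = b := by
  induction h with
  | rel a b h' => simpa [Rp] using h'
  | refl a => rfl
  | symm a b _ ih => exact ih.symm
  | trans a b c _ _ ih1 ih2 => exact ih1.trans ih2

lemma cyc_one : cyc (1 : Equiv.Perm V) = Nat.card V := by
  rw [cyc, ncR_def]
  refine (Nat.card_congr (Equiv.ofBijective (Quotient.mk _) ⟨?_, Quotient.mk''_surjective⟩)).symm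
  intro a b h
  exact eqvGen_one (Quotient.exact h)

lemma ncR_lt_of_rel {r : V → V → Prop} {u v : V} (h : EqvGen r u v) (hne : u ≠ v) :
    ncR r < Nat.card V := by
  classical
  let J : Quotient (Relation.EqvGen.setoid r) → {x : V // x ≠ u} := fun q =>
    if h' : q.out = u then ⟨v, hne.symm⟩ else ⟨q.out, h'⟩
  have hJ : Function.Injective J := by
    intro q q' hqq
    simp only [J] at hqq
    split_ifs at hqq with h1 h2 h2 <;>
      (try replace hqq := congrArg Subtype.val hqq) <;> simp only at hqq
    · rw [← Quotient.out_eq q, ← Quotient.out_eq q', h1, h2]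
    · have hq' : q' = Quotient.mk _ u := by
        rw [← Quotient.out_eq q', ← hqq]; exact (Quotient.sound (EqvGen.symm _ _ h))
      rw [← Quotient.out_eq q, h1, hq']
    · have hq : q = Quotient.mk _ u := by
        rw [← Quotient.out_eq q, hqq]; exact (Quotient.sound (EqvGen.symm _ _ h))
      rw [← Quotient.out_eq q', h2, hq]
    · rw [← Quotient.out_eq q, ← Quotient.out_eq q', hqq]
  have hcard := Nat.card_le_card_of_injective J hJ
  rw [← ncR_def] at hcard
  have h2 : Nat.card V = Nat.card {x : V // x ≠ u} + 1 := by
    rw [← Nat.card_congr (Equiv.optionSubtypeNe u), Finite.card_option]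
  omega

omit [Finite V] in
lemma swap_steps {σ : Equiv.Perm V} {u v : V} :
    ∀ a b, Rp (σ * Equiv.swap u v) a b → EqvGen (padd (Rp σ) u v) a b := by
  intro a b hab
  have hab' : σ (Equiv.swap u v a) = b := hab
  classical
  by_cases hau : a = u
  · rw [hau] at hab' ⊢
    rw [Equiv.swap_apply_left] at hab'
    exact EqvGen.trans _ _ _ (padd_rel u v) (EqvGen.rel _ _ (Or.inl hab'))
  · by_cases hav : a = v
    · rw [hav] at hab' ⊢
      rw [Equiv.swap_apply_right] at hab'
      exact EqvGen.trans _ _ _ (EqvGen.symm _ _ (padd_rel u v)) (EqvGen.rel _ _ (Or.inl hab'))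
    · rw [Equiv.swap_apply_of_ne_of_ne hau hav] at hab'
      exact EqvGen.rel _ _ (Or.inl hab')

/-- multiplying by a swap decreases the number of cycles by at most one -/
lemma cyc_le_mul_swap (σ : Equiv.Perm V) (u v : V) :
    cyc σ ≤ cyc (σ * Equiv.swap u v) + 1 := by
  have h1 : ncR (padd (Rp σ) u v) ≤ cyc (σ * Equiv.swap u v) := ncR_le swap_steps
  have h2 : cyc σ ≤ ncR (padd (Rp σ) u v) + 1 := ncR_le_padd_add_one _ u v
  omega

lemma cyc_mul_swap_le (σ : Equiv.Perm V) (u v : V) :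
    cyc (σ * Equiv.swap u v) ≤ cyc σ + 1 := by
  have := cyc_le_mul_swap (σ * Equiv.swap u v) u v
  rwa [mul_assoc, Equiv.swap_mul_self, mul_one] at this

omit [Finite V] in
lemma pow_chain (σ : Equiv.Perm V) (v : V) : ∀ k : ℕ, EqvGen (Rp σ) v ((σ ^ k) v) := by
  intro k
  induction k with
  | zero => exact EqvGen.refl v
  | succ n ih =>
    refine EqvGen.trans _ _ _ ih (EqvGen.rel _ _ ?_)
    show σ ((σ ^ n) v) = (σ ^ (n+1)) v
    rw [pow_succ', Equiv.Perm.mul_apply]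

/-- walking around the cycle: if `u, v` are in distinct `σ`-orbits then `u ∼ v`
under `σ * swap u v`. -/
lemma swap_walk {σ : Equiv.Perm V} {u v : V} (hne : ¬ EqvGen (Rp σ) u v) :
    EqvGen (Rp (σ * Equiv.swap u v)) u v := by
  classical
  have huv : u ≠ v := fun h => hne (h ▸ EqvGen.refl u)
  set d := Function.minimalPeriod σ v with hd
  have hdpos : 0 < d := by
    apply Function.minimalPeriod_pos_of_mem_periodicPts
    refine ⟨orderOf σ, orderOf_pos σ, ?_⟩
    show σ^[orderOf σ] v = v
    rw [Equiv.Perm.iterate_eq_pow, pow_orderOf_eq_one]; rfl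
  have hstep : ∀ k : ℕ, 1 ≤ k → k ≤ d → EqvGen (Rp (σ * Equiv.swap u v)) u ((σ ^ k) v) := by
    intro k
    induction k with
    | zero => intro h; omega
    | succ n ih =>
      intro _ hle
      rcases Nat.eq_or_lt_of_le (Nat.one_le_iff_ne_zero.mpr (Nat.succ_ne_zero n)) with h1 | h1
      · -- n = 0 : first step
        have hn : n = 0 := by omega
        subst hn
        refine EqvGen.rel _ _ ?_
        show σ (Equiv.swap u v u) = (σ ^ 1) v
        rw [Equiv.swap_apply_left, pow_one]
      · -- n ≥ 1
        have hn1 : 1 ≤ n := by omega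
        have hnd : n ≤ d := by omega
        have ihh := ih hn1 hnd
        have hnv : (σ ^ n) v ≠ v := by
          intro hh
          have : Function.IsPeriodicPt σ n v := by
            show σ^[n] v = v
            rwa [Equiv.Perm.iterate_eq_pow]
          have := Function.IsPeriodicPt.minimalPeriod_le (by omega) this
          omega
        have hnu : (σ ^ n) v ≠ u := by
          intro hh
          exact hne (EqvGen.symm _ _ (hh ▸ pow_chain σ v n))
        refine EqvGen.trans _ _ _ ihh (EqvGen.rel _ _ ?_)
        show σ (Equiv.swap u v ((σ ^ n) v)) = (σ ^ (n+1)) v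
        rw [Equiv.swap_apply_of_ne_of_ne hnu hnv, pow_succ', Equiv.Perm.mul_apply]
  have := hstep d hdpos le_rfl
  have hfix : (σ ^ d) v = v := by
    have : Function.IsPeriodicPt σ d v := Function.isPeriodicPt_minimalPeriod σ v
    rwa [Function.IsPeriodicPt, Function.IsFixedPt, Equiv.Perm.iterate_eq_pow] at this
  rwa [hfix] at this

/-- merging two distinct orbits with a swap decreases the cycle count by exactly one
(here: at least one). -/
lemma cyc_mul_swap_merge {σ : Equiv.Perm V} {u v : V} (hne : ¬ EqvGen (Rp σ) u v) :
    cyc (σ * Equiv.swap u v) + 1 ≤ cyc σ := by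
  classical
  have hwalk := swap_walk hne
  -- padd-steps ⊆ EqvGen (Rp (σ * swap u v))
  have hincl : ∀ a b, padd (Rp σ) u v a b → EqvGen (Rp (σ * Equiv.swap u v)) a b := by
    intro a b hab
    rcases hab with hab | ⟨rfl, rfl⟩
    · by_cases hau : a = u
      · rw [hau] at hab ⊢
        -- σ u = (σ * swap u v) v
        refine EqvGen.trans _ _ _ hwalk (EqvGen.rel _ _ ?_)
        show σ (Equiv.swap u v v) = b
        rw [Equiv.swap_apply_right]; exact hab
      · by_cases hav : a = v
        · rw [hav] at hab ⊢
          refine EqvGen.trans _ _ _ (EqvGen.symm _ _ hwalk) (EqvGen.rel _ _ ?_)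
          show σ (Equiv.swap u v u) = b
          rw [Equiv.swap_apply_left]; exact hab
        · refine EqvGen.rel _ _ ?_
          show σ (Equiv.swap u v a) = b
          rwa [Equiv.swap_apply_of_ne_of_ne hau hav]
    · exact hwalk
  have heq : cyc (σ * Equiv.swap u v) = ncR (padd (Rp σ) u v) :=
    ncR_congr swap_steps hincl
  have h2 := ncR_padd_add_one_le hne
  have h3 : cyc σ = ncR (Rp σ) := rfl
  omega

omit [Finite V] in
lemma fix_class {η : Equiv.Perm V} {w : V} (hw : η w = w) {a b : V}
    (h : EqvGen (Rp η) a b) : (a = w ↔ b = w) := by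
  induction h with
  | rel a b h' =>
    constructor
    · rintro rfl; rw [← h', hw]
    · rintro rfl; exact η.injective (by rw [h', hw])
  | refl a => exact Iff.rfl
  | symm a b _ ih => exact ih.symm
  | trans a b c _ _ ih1 ih2 => exact ih1.trans ih2

lemma cyc_mul_swap_succ {y : Equiv.Perm V} {u : V} (hu : y u ≠ u) :
    cyc (y * Equiv.swap u (y u)) = cyc y + 1 := by
  classical
  set v := y u with hv
  set y' := y * Equiv.swap u v with hy'
  have hvfix : y' v = v := by
    show y (Equiv.swap u v v) = v
    rw [Equiv.swap_apply_right]
  have hne : ¬ EqvGen (Rp y') u v := by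
    intro h
    exact hu.symm ((fix_class hvfix h).mpr rfl)
  have hmerge := cyc_mul_swap_merge hne
  have hyy : y' * Equiv.swap u v = y := by
    rw [hy', mul_assoc, Equiv.swap_mul_self, mul_one]
  rw [hyy] at hmerge
  have hle : cyc y' ≤ cyc y + 1 := cyc_mul_swap_le y u v
  omega

/-- the union of step relations of two permutations -/
def Rp2 (x y : Equiv.Perm V) : V → V → Prop := fun a b => Rp x a b ∨ Rp y a b

omit [Finite V] [DecidableEq V] in
lemma rp2_one (x : Equiv.Perm V) :
    ∀ a b, Rp2 x (1 : Equiv.Perm V) a b → EqvGen (Rp x) a b := by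
  intro a b h
  rcases h with h | h
  · exact EqvGen.rel _ _ h
  · have : a = b := h
    rw [this]; exact EqvGen.refl b

lemma jac_one (x : Equiv.Perm V) :
    cyc x + cyc (1 : Equiv.Perm V) + cyc (x * 1) ≤ Nat.card V + 2 * ncR (Rp2 x 1) := by
  have h1 : ncR (Rp2 x 1) = cyc x := by
    refine ncR_congr (rp2_one x) ?_
    intro a b h; exact EqvGen.rel _ _ (Or.inl h)
  rw [mul_one, cyc_one, h1]
  omega

lemma jac_aux : ∀ (k : ℕ) (x y : Equiv.Perm V), Nat.card V - cyc y ≤ k →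
    cyc x + cyc y + cyc (x * y) ≤ Nat.card V + 2 * ncR (Rp2 x y) := by
  intro k
  induction k with
  | zero =>
    intro x y hk
    by_cases hy : y = 1
    · subst hy; exact jac_one x
    · exfalso
      obtain ⟨u, hu⟩ : ∃ u, y u ≠ u := by
        by_contra hc
        push_neg at hc
        exact hy (Equiv.ext hc)
      have := ncR_lt_of_rel (EqvGen.rel (r := Rp y) u (y u) rfl) (Ne.symm hu)
      have h2 : cyc y = ncR (Rp y) := rfl
      omega
  | succ k ih =>
    intro x y hk
    by_cases hy : y = 1
    · subst hy; exact jac_one x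
    · obtain ⟨u, hu⟩ : ∃ u, y u ≠ u := by
        by_contra hc
        push_neg at hc
        exact hy (Equiv.ext hc)
      set v := y u with hv
      have huv : u ≠ v := Ne.symm hu
      set y' := y * Equiv.swap u v with hy'
      have hcy' : cyc y' = cyc y + 1 := cyc_mul_swap_succ hu
      have hklt : Nat.card V - cyc y' ≤ k := by
        have := ncR_le_card (Rp y')
        have h2 : cyc y' = ncR (Rp y') := rfl
        omega
      have IH := ih x y' hklt
      -- relation comparison : ncR (Rp2 x y) = ncR (padd (Rp2 x y') u v)
      have hr1 : ∀ a b, Rp2 x y a b → EqvGen (padd (Rp2 x y') u v) a b := by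
        intro a b hab
        rcases hab with hab | hab
        · exact EqvGen.rel _ _ (Or.inl (Or.inl hab))
        · have hab' : y a = b := hab
          by_cases hau : a = u
          · rw [hau] at hab' ⊢
            rw [← hv] at hab'
            rw [← hab']
            exact padd_rel u v
          · by_cases hav : a = v
            · rw [hav] at hab' ⊢
              -- y v = y' u
              have : y' u = b := by
                show y (Equiv.swap u v u) = b
                rw [Equiv.swap_apply_left]; exact hab'
              exact EqvGen.trans _ _ _ (EqvGen.symm _ _ (padd_rel u v))
                (EqvGen.rel _ _ (Or.inl (Or.inr this)))
            · have : y' a = b := by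
                show y (Equiv.swap u v a) = b
                rw [Equiv.swap_apply_of_ne_of_ne hau hav]; exact hab'
              exact EqvGen.rel _ _ (Or.inl (Or.inr this))
      have hr2 : ∀ a b, padd (Rp2 x y') u v a b → EqvGen (Rp2 x y) a b := by
        intro a b hab
        rcases hab with (hab | hab) | ⟨rfl, rfl⟩
        · exact EqvGen.rel _ _ (Or.inl hab)
        · have hab' : y' a = b := hab
          by_cases hau : a = u
          · rw [hau] at hab' ⊢
            -- y' u = y v : u ~y v ~y y v
            have hb : y v = b := by
              rw [← hab']
              show y v = y' u
              show y v = y (Equiv.swap u v u)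
              rw [Equiv.swap_apply_left]
            exact EqvGen.trans _ _ _ (EqvGen.rel _ _ (Or.inr hv.symm))
              (EqvGen.rel _ _ (Or.inr hb))
          · by_cases hav : a = v
            · rw [hav] at hab' ⊢
              have hb : v = b := by
                rw [← hab']
                show v = y' v
                show v = y (Equiv.swap u v v)
                rw [Equiv.swap_apply_right, hv]
              rw [← hb]
              exact EqvGen.refl v
            · have : y a = b := by
                rw [← hab']
                show y a = y' a
                show y a = y (Equiv.swap u v a)
                rw [Equiv.swap_apply_of_ne_of_ne hau hav]
              exact EqvGen.rel _ _ (Or.inr this)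
        · exact EqvGen.rel _ _ (Or.inr hv.symm)
      have hRR : ncR (Rp2 x y) = ncR (padd (Rp2 x y') u v) := ncR_congr hr1 hr2
      have hxyy : x * y' * Equiv.swap u v = x * y := by
        rw [hy', mul_assoc, mul_assoc, Equiv.swap_mul_self, mul_one]
      by_cases hE : EqvGen (Rp2 x y') u v
      · -- pair redundant
        have hpe : ncR (padd (Rp2 x y') u v) = ncR (Rp2 x y') := by
          refine ncR_congr ?_ ?_
          · intro a b hab
            rcases hab with hab | ⟨rfl, rfl⟩
            · exact EqvGen.rel _ _ hab
            · exact hE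
          · intro a b hab
            exact EqvGen.rel _ _ (Or.inl hab)
        have hcxy : cyc (x * y) ≤ cyc (x * y') + 1 := by
          have := cyc_le_mul_swap (x * y) u v
          have h2 : x * y * Equiv.swap u v = x * y' := by
            rw [hy', ← mul_assoc]
          rwa [h2] at this
        omega
      · -- genuine merge
        have hE2 : ¬ EqvGen (Rp (x * y')) u v := by
          intro h
          apply hE
          refine eqvGen_trans' ?_ _ _ h
          intro a b hab
          have : x (y' a) = b := hab
          exact EqvGen.trans _ _ _ (EqvGen.rel _ _ (Or.inr rfl))
            (EqvGen.rel _ _ (Or.inl this))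
        have hmerge := cyc_mul_swap_merge hE2
        rw [hxyy] at hmerge
        have hpadd := ncR_padd_add_one_le (r := Rp2 x y') (u := u) (v := v) hE
        have t1 : cyc x + cyc y' + cyc (x * y') ≤ Nat.card V + 2 * ncR (Rp2 x y') := IH
        have t3 : cyc (x * y) + 1 ≤ cyc (x * y') := hmerge
        have t4 : cyc y' = cyc y + 1 := hcy'
        have t5 : ncR (Rp2 x y) = ncR (padd (Rp2 x y') u v) := hRR
        have t6 : ncR (padd (Rp2 x y') u v) + 1 ≤ ncR (Rp2 x y') := hpadd
        have t7 : ncR (Rp2 x y') ≤ ncR (padd (Rp2 x y') u v) + 1 :=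
          ncR_le_padd_add_one (Rp2 x y') u v
        omega

/-- Jacques' genus inequality for a pair of permutations -/
lemma jacques (x y : Equiv.Perm V) :
    cyc x + cyc y + cyc (x * y) ≤ Nat.card V + 2 * ncR (Rp2 x y) :=
  jac_aux (Nat.card V - cyc y) x y le_rfl

omit [Finite V] [DecidableEq V] in
lemma eqvGen_zpow {σ : Equiv.Perm V} {a b : V} (h : EqvGen (Rp σ) a b) :
    ∃ i : ℤ, (σ ^ i) a = b := by
  induction h with
  | rel a b h' => exact ⟨1, by rw [zpow_one]; exact h'⟩
  | refl a => exact ⟨0, by simp⟩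
  | symm a b _ ih =>
    obtain ⟨i, hi⟩ := ih
    refine ⟨-i, ?_⟩
    rw [← hi, ← Equiv.Perm.mul_apply, ← zpow_add]
    simp
  | trans a b c _ _ ih1 ih2 =>
    obtain ⟨i, hi⟩ := ih1
    obtain ⟨j, hj⟩ := ih2
    refine ⟨j + i, ?_⟩
    rw [zpow_add, Equiv.Perm.mul_apply, hi, hj]

omit [Finite V] [DecidableEq V] in
lemma invol_inv {β : Equiv.Perm V} (hβ2 : β * β = 1) : β⁻¹ = β :=
  inv_eq_of_mul_eq_one_right hβ2

omit [Finite V] [DecidableEq V] in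
lemma invol_apply {β : Equiv.Perm V} (hβ2 : β * β = 1) (z : V) : β (β z) = z := by
  have : (β * β) z = (1 : Equiv.Perm V) z := by rw [hβ2]
  simpa using this

omit [Finite V] [DecidableEq V] in
lemma conj_zpow_invol {α σ : Equiv.Perm V} (hα2 : α * α = 1) (hc : α * σ * α = σ⁻¹)
    (m : ℤ) : α * σ ^ m = σ ^ (-m) * α := by
  have h1 : (MulAut.conj α) σ = σ⁻¹ := by
    show α * σ * α⁻¹ = σ⁻¹
    rwa [invol_inv hα2]
  have h2 : (MulAut.conj α) (σ ^ m) = σ ^ (-m) := by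
    rw [map_zpow, h1]
    exact (inv_zpow σ m).trans (zpow_neg σ m).symm
  have h3 : α * σ ^ m * α⁻¹ = σ ^ (-m) := h2
  rw [invol_inv hα2] at h3
  calc α * σ ^ m = α * σ ^ m * α * α := by rw [mul_assoc, hα2, mul_one]
  _ = σ ^ (-m) * α := by rw [h3]

omit [Finite V] [DecidableEq V] in
lemma no_same_cycle {α β : Equiv.Perm V} (hα2 : α * α = 1) (hβ2 : β * β = 1)
    (hα : ∀ w, α w ≠ w) (hβ : ∀ w, β w ≠ w) (v : V) (i : ℤ) :
    ((α * β) ^ i) v ≠ α v := by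
  intro hi
  set σ := α * β with hσ
  have hβα : β * α = σ⁻¹ := by
    rw [hσ, mul_inv_rev, invol_inv hα2, invol_inv hβ2]
  have hc : α * σ * α = σ⁻¹ := by
    rw [hσ, ← mul_assoc α α β, hα2, one_mul, hβα]
  have key : ∀ m : ℤ, α ((σ ^ m) v) = (σ ^ (i - m)) v := by
    intro m
    have : α ((σ ^ m) v) = (σ ^ (-m)) (α v) := by
      rw [← Equiv.Perm.mul_apply, conj_zpow_invol hα2 hc, Equiv.Perm.mul_apply]
    rw [this, ← hi, ← Equiv.Perm.mul_apply, ← zpow_add]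
    congr 1
    ring
  rcases Int.even_or_odd i with ⟨m, hm⟩ | ⟨m, hm⟩
  · -- i = 2m : α fixes σ^m v
    have hkey := key m
    have h2 : i - m = m := by omega
    rw [h2] at hkey
    exact hα _ hkey
  · -- i = 2m+1 : β fixes σ^m v
    have hβeq : β = α * σ := by
      rw [hσ, ← mul_assoc, hα2, one_mul]
    have hpow : σ ((σ ^ m) v) = (σ ^ (m + 1)) v := by
      rw [← Equiv.Perm.mul_apply, ← zpow_one_add, add_comm]
    have h1 : β ((σ ^ m) v) = α ((σ ^ (m + 1)) v) := by
      rw [hβeq, Equiv.Perm.mul_apply, hpow]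
    have h3 : i - (m + 1) = m := by omega
    have hkey := key (m + 1)
    rw [h3] at hkey
    rw [hkey] at h1
    exact hβ _ h1

omit [Finite V] [DecidableEq V] in
lemma mulstep_le {α β : Equiv.Perm V} :
    ∀ a b, Rp (α * β) a b → EqvGen (Rp2 α β) a b := by
  intro a b hab
  have : α (β a) = b := hab
  exact EqvGen.trans _ _ _ (EqvGen.rel (r := Rp2 α β) a (β a) (Or.inr rfl))
    (EqvGen.rel _ _ (Or.inl this))

/-- each `{α,β}`-component contains at least two `αβ`-cycles -/
lemma two_to_one {α β : Equiv.Perm V} (hα2 : α * α = 1) (hβ2 : β * β = 1)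
    (hα : ∀ w, α w ≠ w) (hβ : ∀ w, β w ≠ w) :
    2 * ncR (Rp2 α β) ≤ cyc (α * β) := by
  classical
  let Ψ : Quotient (Relation.EqvGen.setoid (Rp2 α β)) × Bool →
      Quotient (Relation.EqvGen.setoid (Rp (α * β))) :=
    fun qb => Quotient.mk _ (if qb.2 then qb.1.out else α qb.1.out)
  have hproj : ∀ z w : V, EqvGen (Rp (α * β)) z w → EqvGen (Rp2 α β) z w :=
    fun z w h => eqvGen_trans' mulstep_le z w h
  have hstep : ∀ z : V, EqvGen (Rp2 α β) z (α z) :=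
    fun z => EqvGen.rel _ _ (Or.inl rfl)
  have hΨ : Function.Injective Ψ := by
    rintro ⟨q, b⟩ ⟨q', b'⟩ h
    simp only [Ψ] at h
    rw [mkeq_iff] at h
    have hqq : q = q' := by
      have h2 : EqvGen (Rp2 α β) (if b then q.out else α q.out)
          (if b' then q'.out else α q'.out) := hproj _ _ h
      have e1 : EqvGen (Rp2 α β) q.out (if b then q.out else α q.out) := by
        cases b <;> simp only [if_true, if_false, Bool.false_eq_true] <;>
          [exact hstep q.out; exact EqvGen.refl _]
      have e2 : EqvGen (Rp2 α β) (if b' then q'.out else α q'.out) q'.out := by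
        cases b' <;> simp only [if_true, if_false, Bool.false_eq_true] <;>
          [exact EqvGen.symm _ _ (hstep q'.out); exact EqvGen.refl _]
      have := EqvGen.trans _ _ _ (EqvGen.trans _ _ _ e1 h2) e2
      rw [← Quotient.out_eq q, ← Quotient.out_eq q']
      exact Quotient.sound this
    subst hqq
    suffices hb : b = b' by rw [hb]
    by_contra hbb
    have hcases : EqvGen (Rp (α * β)) q.out (α q.out) := by
      cases b <;> cases b' <;>
        simp only [Bool.false_eq_true, if_false, if_true] at h
      · exact absurd rfl hbb
      · exact EqvGen.symm _ _ h
      · exact h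
      · exact absurd rfl hbb
    obtain ⟨i, hi⟩ := eqvGen_zpow hcases
    exact no_same_cycle hα2 hβ2 hα hβ q.out i hi
  have hcard := Nat.card_le_card_of_injective Ψ hΨ
  rw [Nat.card_prod] at hcard
  have : Nat.card Bool = 2 := by simp [Nat.card_eq_fintype_card]
  rw [this] at hcard
  have e1 : ncR (Rp2 α β) * 2 = 2 * ncR (Rp2 α β) := by ring
  rw [ncR_def (Rp2 α β)] at e1 ⊢
  rw [cyc, ncR_def]
  omega

/-- triple union step relation -/
def Rp3 (α β γ : Equiv.Perm V) : V → V → Prop := fun a b => α a = b ∨ β a = b ∨ γ a = b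

/-- each component splits into at most two components of the even subgroup -/
lemma half_lemma {α β γ : Equiv.Perm V} (hα2 : α * α = 1) (hβ2 : β * β = 1)
    (hγ2 : γ * γ = 1) :
    ncR (Rp2 (α * β) (β * γ)) ≤ 2 * ncR (Rp3 α β γ) := by
  classical
  have hαα := invol_apply hα2
  have hββ := invol_apply hβ2
  have hγγ := invol_apply hγ2
  set RH := Rp2 (α * β) (β * γ) with hRH
  have hconj : ∀ a b, EqvGen RH a b → EqvGen RH (β a) (β b) := by
    intro a b h
    induction h with
    | rel a b h' =>
      rcases h' with h' | h'
      · -- b = α (β a)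
        have hb : (α * β) a = b := h'
        refine EqvGen.symm _ _ (EqvGen.rel _ _ (Or.inl ?_))
        show (α * β) (β b) = β a
        show α (β (β b)) = β a
        rw [hββ, ← hb]
        show α ((α * β) a) = β a
        show α (α (β a)) = β a
        rw [hαα]
      · have hb : (β * γ) a = b := h'
        have hb' : β b = γ a := by rw [← hb]; show β (β (γ a)) = γ a; rw [hββ]
        refine EqvGen.symm _ _ (EqvGen.rel _ _ (Or.inr ?_))
        show (β * γ) (β b) = β a
        rw [hb']
        show β (γ (γ a)) = β a
        rw [hγγ]
    | refl a => exact EqvGen.refl _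
    | symm a b _ ih => exact EqvGen.symm _ _ ih
    | trans a b c _ _ ih1 ih2 => exact EqvGen.trans _ _ _ ih1 ih2
  have hM : ∀ a b, EqvGen (Rp3 α β γ) a b →
      EqvGen RH a b ∨ EqvGen RH a (β b) := by
    intro a b h
    induction h with
    | rel a b h' =>
      rcases h' with h' | h' | h'
      · -- b = α a
        right
        refine EqvGen.symm _ _ (EqvGen.rel _ _ (Or.inl ?_))
        show (α * β) (β b) = a
        show α (β (β b)) = a
        rw [hββ, ← h', hαα]
      · right
        have : β b = a := by rw [← h', hββ]
        rw [this]; exact EqvGen.refl a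
      · right
        exact EqvGen.rel _ _ (Or.inr (by show β (γ a) = β b; rw [h']))
    | refl a => exact Or.inl (EqvGen.refl a)
    | symm a b _ ih =>
      rcases ih with ih | ih
      · exact Or.inl (EqvGen.symm _ _ ih)
      · right
        have := hconj _ _ ih
        rw [hββ] at this
        exact EqvGen.symm _ _ this
    | trans a b c _ _ ih1 ih2 =>
      rcases ih1 with ih1 | ih1 <;> rcases ih2 with ih2 | ih2
      · exact Or.inl (EqvGen.trans _ _ _ ih1 ih2)
      · exact Or.inr (EqvGen.trans _ _ _ ih1 ih2)
      · right
        exact EqvGen.trans _ _ _ ih1 (hconj _ _ ih2)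
      · left
        have := hconj _ _ ih2
        rw [hββ] at this
        exact EqvGen.trans _ _ _ ih1 this
  -- surjection from components × Bool onto RH-components
  let Φ : Quotient (Relation.EqvGen.setoid (Rp3 α β γ)) × Bool →
      Quotient (Relation.EqvGen.setoid RH) :=
    fun qb => Quotient.mk _ (if qb.2 then qb.1.out else β qb.1.out)
  have hΦ : Function.Surjective Φ := by
    intro qh
    induction qh using Quotient.ind with | _ w =>
    have hout : EqvGen (Rp3 α β γ) w ((Quotient.mk (Relation.EqvGen.setoid (Rp3 α β γ)) w).out) := by
      rw [← mkeq_iff, Quotient.out_eq]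
    rcases hM _ _ hout with h | h
    · exact ⟨⟨Quotient.mk _ w, true⟩, (Quotient.sound (EqvGen.symm _ _ h) : _)⟩
    · exact ⟨⟨Quotient.mk _ w, false⟩, (Quotient.sound (EqvGen.symm _ _ h) : _)⟩
  have hcard := Nat.card_le_card_of_surjective Φ hΦ
  rw [Nat.card_prod] at hcard
  have hb2 : Nat.card Bool = 2 := by simp [Nat.card_eq_fintype_card]
  rw [hb2] at hcard
  rw [ncR_def RH, ncR_def (Rp3 α β γ)]
  omega

/-- the key inequality: a 3-colored graph on `Nat.card V` vertices with `K` components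
satisfies `g_{αβ} + g_{βγ} + g_{αγ} ≤ (Nat.card V)/2 + 2K`. -/
lemma tri_ineq {α β γ : Equiv.Perm V} (hα2 : α * α = 1) (hβ2 : β * β = 1)
    (hγ2 : γ * γ = 1) (hα : ∀ w, α w ≠ w) (hβ : ∀ w, β w ≠ w) (hγ : ∀ w, γ w ≠ w) :
    2 * (ncR (Rp2 α β) + ncR (Rp2 β γ) + ncR (Rp2 α γ)) ≤
      Nat.card V + 4 * ncR (Rp3 α β γ) := by
  have hj := jacques (α * β) (β * γ)
  have hmul : (α * β) * (β * γ) = α * γ := by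
    rw [mul_assoc, ← mul_assoc β β γ, hβ2, one_mul]
  rw [hmul] at hj
  have h1 := two_to_one hα2 hβ2 hα hβ
  have h2 := two_to_one hβ2 hγ2 hβ hγ
  have h3 := two_to_one hα2 hγ2 hα hγ
  have h4 := half_lemma hα2 hβ2 hγ2
  omega

end PermLayer


section GraphLayer

open Equiv Relation

variable {V : Type} [Finite V]

/-- the involution of color `c` as a permutation -/
def pe (G : CGraph (Fin 4) V) (c : Fin 4) : Equiv.Perm V :=
  ⟨G.inv c, G.inv c, fun v => G.invol c v, fun v => G.invol c v⟩

omit [Finite V] in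
lemma pe_invol (G : CGraph (Fin 4) V) (c : Fin 4) : pe G c * pe G c = 1 := by
  ext v
  exact G.invol c v

omit [Finite V] in
lemma pe_fpf (G : CGraph (Fin 4) V) (c : Fin 4) : ∀ v, (pe G c) v ≠ v :=
  fun v => G.no_fixed c v

omit [Finite V] in
lemma g_eq_ncR (G : CGraph (Fin 4) V) (B : Set (Fin 4)) :
    G.g B = ncR (fun v w => ∃ c ∈ B, G.inv c v = w) := rfl

lemma g_pair (G : CGraph (Fin 4) V) (r s : Fin 4) :
    G.g {r, s} = ncR (Rp2 (pe G r) (pe G s)) := by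
  rw [g_eq_ncR]
  refine ncR_congr ?_ ?_
  · rintro a b ⟨c, hc, hab⟩
    simp only [Set.mem_insert_iff, Set.mem_singleton_iff] at hc
    rcases hc with rfl | rfl
    · exact EqvGen.rel _ _ (Or.inl hab)
    · exact EqvGen.rel _ _ (Or.inr hab)
  · intro a b hab
    rcases hab with hab | hab
    · exact EqvGen.rel _ _ ⟨r, by simp, hab⟩
    · exact EqvGen.rel _ _ ⟨s, by simp, hab⟩

lemma g_three (G : CGraph (Fin 4) V) (i j k l : Fin 4)
    (h : ∀ c : Fin 4, c ≠ i ↔ (c = j ∨ c = k ∨ c = l)) :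
    G.g {c | c ≠ i} = ncR (Rp3 (pe G j) (pe G k) (pe G l)) := by
  rw [g_eq_ncR]
  refine ncR_congr ?_ ?_
  · rintro a b ⟨c, hc, hab⟩
    rcases (h c).mp hc with rfl | rfl | rfl
    · exact EqvGen.rel _ _ (Or.inl hab)
    · exact EqvGen.rel _ _ (Or.inr (Or.inl hab))
    · exact EqvGen.rel _ _ (Or.inr (Or.inr hab))
  · intro a b hab
    rcases hab with hab | hab | hab
    · exact EqvGen.rel _ _ ⟨j, (h j).mpr (Or.inl rfl), hab⟩
    · exact EqvGen.rel _ _ ⟨k, (h k).mpr (Or.inr (Or.inl rfl)), hab⟩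
    · exact EqvGen.rel _ _ ⟨l, (h l).mpr (Or.inr (Or.inr rfl)), hab⟩

/-- the fundamental inequality forced by a sphere link: for any color `i` and the
complementary colors `j,k,l`, `2(g_{jk} + g_{kl} + g_{jl}) ≤ 2p + 4 g_î`. -/
lemma link_ineq (G : CGraph (Fin 4) V) (i j k l : Fin 4)
    (h : ∀ c : Fin 4, c ≠ i ↔ (c = j ∨ c = k ∨ c = l)) :
    2 * (G.g {j, k} + G.g {k, l} + G.g {j, l}) ≤
      Nat.card V + 4 * G.g {c | c ≠ i} := by
  classical
  rw [g_pair, g_pair, g_pair, g_three G i j k l h]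
  exact tri_ineq (pe_invol G j) (pe_invol G k) (pe_invol G l)
    (pe_fpf G j) (pe_fpf G k) (pe_fpf G l)

end GraphLayer



section Enumeration

open CGraph

/-- the six 4-cycles on `Fin 4` -/
def p1 : Equiv.Perm (Fin 4) := ([0,1,2,3] : List (Fin 4)).formPerm
def p2 : Equiv.Perm (Fin 4) := ([0,1,3,2] : List (Fin 4)).formPerm
def p3 : Equiv.Perm (Fin 4) := ([0,2,1,3] : List (Fin 4)).formPerm
def p4 : Equiv.Perm (Fin 4) := ([0,2,3,1] : List (Fin 4)).formPerm
def p5 : Equiv.Perm (Fin 4) := ([0,3,1,2] : List (Fin 4)).formPerm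
def p6 : Equiv.Perm (Fin 4) := ([0,3,2,1] : List (Fin 4)).formPerm

lemma char_decide : ∀ σ : Equiv.Perm (Fin 4),
    ((∀ c, σ c ≠ c) ∧ σ * σ ≠ 1) ↔
      (σ = p1 ∨ σ = p2 ∨ σ = p3 ∨ σ = p4 ∨ σ = p5 ∨ σ = p6) := by decide

lemma isCyclicPerm_formPerm (l : List (Fin 4)) (hnd : l.Nodup) (hlen : 2 ≤ l.length)
    (hf : ∀ c, l.formPerm c ≠ c) : IsCyclicPerm l.formPerm :=
  ⟨List.isCycle_formPerm hnd hlen, hf⟩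

lemma isCyclicPerm_iff (σ : Equiv.Perm (Fin 4)) :
    IsCyclicPerm σ ↔ (σ = p1 ∨ σ = p2 ∨ σ = p3 ∨ σ = p4 ∨ σ = p5 ∨ σ = p6) := by
  constructor
  · rintro ⟨hcyc, hf⟩
    refine (char_decide σ).mp ⟨hf, ?_⟩
    intro hsq
    have h1 : orderOf σ = σ.support.card := hcyc.orderOf
    have h2 : σ.support = Finset.univ := by
      ext x
      simp [Equiv.Perm.mem_support, hf x]
    have h3 : orderOf σ = 4 := by
      rw [h1, h2]
      simp
    have h4 : orderOf σ ∣ 2 := orderOf_dvd_of_pow_eq_one (by rwa [pow_two])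
    rw [h3] at h4
    exact (by decide : ¬ (4:ℕ) ∣ 2) h4
  · rintro (rfl | rfl | rfl | rfl | rfl | rfl)
    · exact isCyclicPerm_formPerm _ (by decide) (by decide) (by decide)
    · exact isCyclicPerm_formPerm _ (by decide) (by decide) (by decide)
    · exact isCyclicPerm_formPerm _ (by decide) (by decide) (by decide)
    · exact isCyclicPerm_formPerm _ (by decide) (by decide) (by decide)
    · exact isCyclicPerm_formPerm _ (by decide) (by decide) (by decide)
    · exact isCyclicPerm_formPerm _ (by decide) (by decide) (by decide)

/-- the finset of cyclic permutations -/
def cycFinset : Finset (Equiv.Perm (Fin 4)) := {p1, p2, p3, p4, p5, p6}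

lemma finsum_cyclic {M : Type} [AddCommMonoid M] (f : Equiv.Perm (Fin 4) → M) :
    (∑ᶠ σ : {σ : Equiv.Perm (Fin 4) // IsCyclicPerm σ}, f σ.val) =
      f p1 + f p2 + f p3 + f p4 + f p5 + f p6 := by
  have h0 : (∑ᶠ σ : {σ : Equiv.Perm (Fin 4) // IsCyclicPerm σ}, f σ.val) =
      ∑ᶠ (σ : Equiv.Perm (Fin 4)) (_ : IsCyclicPerm σ), f σ :=
    finsum_subtype_eq_finsum_cond (f := f) IsCyclicPerm
  have h1 : ∀ σ : Equiv.Perm (Fin 4), IsCyclicPerm σ = (σ ∈ (↑cycFinset : Set (Equiv.Perm (Fin 4)))) := by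
    intro σ
    apply propext
    rw [isCyclicPerm_iff]
    simp [cycFinset]
  rw [h0]
  simp only [h1]
  rw [finsum_mem_coe_finset]
  show ∑ σ ∈ ({p1, p2, p3, p4, p5, p6} : Finset (Equiv.Perm (Fin 4))), f σ = _
  rw [Finset.sum_insert (by decide), Finset.sum_insert (by decide),
    Finset.sum_insert (by decide), Finset.sum_insert (by decide),
    Finset.sum_insert (by decide), Finset.sum_singleton]
  exact (add_assoc _ _ _).symm.trans (by rw [← add_assoc, ← add_assoc, ← add_assoc])

variable {V : Type} [Finite V]

lemma chi_eval (G : CGraph (Fin 4) V) (σ : Equiv.Perm (Fin 4)) :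
    G.chi σ = ((G.g {0, σ 0} : ℚ) + G.g {1, σ 1} + G.g {2, σ 2} + G.g {3, σ 3})
      - (Nat.card V : ℚ) := by
  rw [CGraph.chi, finsum_eq_sum_of_fintype, Fin.sum_univ_four]
  have h4 : (Nat.card (Fin 4) : ℚ) = 4 := by
    simp [Nat.card_eq_fintype_card]
  rw [h4]
  ring

lemma rho_eval (G : CGraph (Fin 4) V) (hconn : G.Conn) (σ : Equiv.Perm (Fin 4)) :
    G.rho σ = (2 - ((G.g {0, σ 0} : ℚ) + G.g {1, σ 1} + G.g {2, σ 2} + G.g {3, σ 3})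
      + (Nat.card V : ℚ)) / 2 := by
  rw [CGraph.rho, chi_eval, hconn]
  push_cast
  ring

end Enumeration

set_option maxHeartbeats 2000000 in
open CGraph in
/-- Proposition `G-degree-regulargenus(n=3)`: if `Γ` is an order-`2p`
crystallization of a closed 3-manifold (`g_î = 1` for all `i` and `χ(K(Γ)) = 0`), `ρ` is its
regular genus (the least of the genera `ρ_ε(Γ)`) and `m = min{g_{ij}}`, then
`ω_G(Γ) − 3ρ(Γ) = p + 2 − 3·min{g_{ij}}`. -/
theorem stmt10 {p m : ℕ} {ρmin : ℚ} {V : Type} [Finite V]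
    (G : CGraph (Fin 4) V) (hconn : G.Conn) (horder : Nat.card V = 2 * p)
    (hcr : ∀ i : Fin 4, G.g {c | c ≠ i} = 1)
    (hchi : (∑ i : Fin 4, (G.g {c | c ≠ i} : ℚ)) -
        (∑ r : Fin 4, ∑ s : Fin 4, if r = s then 0 else (G.g {r, s} : ℚ)) / 2 +
        2 * (p : ℚ) = 0)
    (hrho : IsLeast {x : ℚ | ∃ σ : Equiv.Perm (Fin 4), IsCyclicPerm σ ∧ G.rho σ = x} ρmin)
    (hm : IsLeast {k : ℕ | ∃ r s : Fin 4, r ≠ s ∧ G.g {r, s} = k} m) :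
    G.omegaG - 3 * ρmin = (p : ℚ) + 2 - 3 * (m : ℚ) := by
  classical
  letI : DecidableEq V := Classical.decEq V
  -- pair set normalizations
  have e10 : ({1, 0} : Set (Fin 4)) = {0, 1} := Set.pair_comm 1 0
  have e20 : ({2, 0} : Set (Fin 4)) = {0, 2} := Set.pair_comm 2 0
  have e30 : ({3, 0} : Set (Fin 4)) = {0, 3} := Set.pair_comm 3 0
  have e21 : ({2, 1} : Set (Fin 4)) = {1, 2} := Set.pair_comm 2 1
  have e31 : ({3, 1} : Set (Fin 4)) = {1, 3} := Set.pair_comm 3 1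
  have e32 : ({3, 2} : Set (Fin 4)) = {2, 3} := Set.pair_comm 3 2
  have hcard : (Nat.card V : ℚ) = 2 * p := by rw [horder]; push_cast; ring
  -- total sum of the six pair counts
  have hsum : (G.g {0,1} : ℚ) + G.g {0,2} + G.g {0,3} + G.g {1,2} + G.g {1,3} + G.g {2,3}
      = 2 * p + 4 := by
    have h1 : (∑ i : Fin 4, (G.g {c | c ≠ i} : ℚ)) = 4 := by
      rw [Fin.sum_univ_four]
      simp [hcr]
      norm_num
    have h2 : (∑ r : Fin 4, ∑ s : Fin 4, if r = s then 0 else (G.g {r, s} : ℚ))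
        = 2 * ((G.g {0,1} : ℚ) + G.g {0,2} + G.g {0,3} + G.g {1,2} + G.g {1,3} + G.g {2,3}) := by
      rw [Fin.sum_univ_four]
      rw [Fin.sum_univ_four, Fin.sum_univ_four, Fin.sum_univ_four, Fin.sum_univ_four]
      rw [if_pos rfl, if_pos rfl, if_pos rfl, if_pos rfl]
      rw [if_neg (by decide), if_neg (by decide), if_neg (by decide), if_neg (by decide),
        if_neg (by decide), if_neg (by decide), if_neg (by decide), if_neg (by decide),
        if_neg (by decide), if_neg (by decide), if_neg (by decide), if_neg (by decide)]
      rw [e10, e20, e30, e21, e31, e32]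
      ring
    rw [h1, h2] at hchi
    linarith
  -- the four link inequalities
  have L0 : 2 * ((G.g {1,2} : ℚ) + G.g {2,3} + G.g {1,3}) ≤ 2 * p + 4 := by
    have h := link_ineq G 0 1 2 3 (by decide)
    rw [hcr 0, horder] at h
    exact_mod_cast h
  have L1 : 2 * ((G.g {0,2} : ℚ) + G.g {2,3} + G.g {0,3}) ≤ 2 * p + 4 := by
    have h := link_ineq G 1 0 2 3 (by decide)
    rw [hcr 1, horder] at h
    exact_mod_cast h
  have L2 : 2 * ((G.g {0,1} : ℚ) + G.g {1,3} + G.g {0,3}) ≤ 2 * p + 4 := by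
    have h := link_ineq G 2 0 1 3 (by decide)
    rw [hcr 2, horder] at h
    exact_mod_cast h
  have L3 : 2 * ((G.g {0,1} : ℚ) + G.g {1,2} + G.g {0,2}) ≤ 2 * p + 4 := by
    have h := link_ineq G 3 0 1 2 (by decide)
    rw [hcr 3, horder] at h
    exact_mod_cast h
  -- the pairwise equalities and the half-sum
  have q01 : (G.g {0,1} : ℚ) = G.g {2,3} := by linarith
  have q02 : (G.g {0,2} : ℚ) = G.g {1,3} := by linarith
  have q03 : (G.g {0,3} : ℚ) = G.g {1,2} := by linarith
  have htot : (G.g {0,1} : ℚ) + G.g {0,2} + G.g {0,3} = p + 2 := by linarith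
  -- evaluation of the six genera
  have r1 : G.rho p1 = (2 - ((G.g {0,1} : ℚ) + G.g {1,2} + G.g {2,3} + G.g {0,3}) + 2 * p) / 2 := by
    have h := rho_eval G hconn p1
    rw [show p1 0 = 1 from by decide, show p1 1 = 2 from by decide,
      show p1 2 = 3 from by decide, show p1 3 = 0 from by decide, e30, hcard] at h
    exact h
  have r2 : G.rho p2 = (2 - ((G.g {0,1} : ℚ) + G.g {1,3} + G.g {0,2} + G.g {2,3}) + 2 * p) / 2 := by
    have h := rho_eval G hconn p2
    rw [show p2 0 = 1 from by decide, show p2 1 = 3 from by decide,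
      show p2 2 = 0 from by decide, show p2 3 = 2 from by decide, e20, e32, hcard] at h
    exact h
  have r3 : G.rho p3 = (2 - ((G.g {0,2} : ℚ) + G.g {1,3} + G.g {1,2} + G.g {0,3}) + 2 * p) / 2 := by
    have h := rho_eval G hconn p3
    rw [show p3 0 = 2 from by decide, show p3 1 = 3 from by decide,
      show p3 2 = 1 from by decide, show p3 3 = 0 from by decide, e21, e30, hcard] at h
    exact h
  have r4 : G.rho p4 = (2 - ((G.g {0,2} : ℚ) + G.g {0,1} + G.g {2,3} + G.g {1,3}) + 2 * p) / 2 := by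
    have h := rho_eval G hconn p4
    rw [show p4 0 = 2 from by decide, show p4 1 = 0 from by decide,
      show p4 2 = 3 from by decide, show p4 3 = 1 from by decide, e10, e31, hcard] at h
    exact h
  have r5 : G.rho p5 = (2 - ((G.g {0,3} : ℚ) + G.g {1,2} + G.g {0,2} + G.g {1,3}) + 2 * p) / 2 := by
    have h := rho_eval G hconn p5
    rw [show p5 0 = 3 from by decide, show p5 1 = 2 from by decide,
      show p5 2 = 0 from by decide, show p5 3 = 1 from by decide, e20, e31, hcard] at h
    exact h
  have r6 : G.rho p6 = (2 - ((G.g {0,3} : ℚ) + G.g {0,1} + G.g {1,2} + G.g {2,3}) + 2 * p) / 2 := by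
    have h := rho_eval G hconn p6
    rw [show p6 0 = 3 from by decide, show p6 1 = 0 from by decide,
      show p6 2 = 1 from by decide, show p6 3 = 2 from by decide, e10, e21, e32, hcard] at h
    exact h
  -- the Gurau degree
  have homega : G.omegaG =
      (G.rho p1 + G.rho p2 + G.rho p3 + G.rho p4 + G.rho p5 + G.rho p6) / 2 := by
    rw [CGraph.omegaG, finsum_cyclic]
  -- lower bounds for ρmin
  have hb1 : ρmin ≤ G.rho p1 := hrho.2 ⟨p1, (isCyclicPerm_iff p1).mpr (Or.inl rfl), rfl⟩
  have hb2 : ρmin ≤ G.rho p2 := hrho.2 ⟨p2, (isCyclicPerm_iff p2).mpr (Or.inr (Or.inl rfl)), rfl⟩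
  have hb3 : ρmin ≤ G.rho p3 :=
    hrho.2 ⟨p3, (isCyclicPerm_iff p3).mpr (Or.inr (Or.inr (Or.inl rfl))), rfl⟩
  -- ρmin is attained
  obtain ⟨σ0, hσ0, hρeq⟩ := hrho.1
  rw [isCyclicPerm_iff] at hσ0
  -- lower bounds for m
  have hm1 : (m : ℚ) ≤ (G.g {0,1} : ℚ) := by exact_mod_cast hm.2 ⟨0, 1, by decide, rfl⟩
  have hm2 : (m : ℚ) ≤ (G.g {0,2} : ℚ) := by exact_mod_cast hm.2 ⟨0, 2, by decide, rfl⟩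
  have hm3 : (m : ℚ) ≤ (G.g {0,3} : ℚ) := by exact_mod_cast hm.2 ⟨0, 3, by decide, rfl⟩
  -- m is attained
  obtain ⟨r, s, hrs, hgm⟩ := hm.1
  have hmem : (m : ℚ) = (G.g {0,1} : ℚ) ∨ (m : ℚ) = (G.g {0,2} : ℚ) ∨
      (m : ℚ) = (G.g {0,3} : ℚ) := by
    have hcast : (m : ℚ) = (G.g {r, s} : ℚ) := by exact_mod_cast hgm.symm
    have hrs12 := (by decide : ∀ r s : Fin 4, r ≠ s → (r = 0 ∧ s = 1) ∨ (r = 0 ∧ s = 2) ∨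
      (r = 0 ∧ s = 3) ∨ (r = 1 ∧ s = 0) ∨ (r = 1 ∧ s = 2) ∨ (r = 1 ∧ s = 3) ∨
      (r = 2 ∧ s = 0) ∨ (r = 2 ∧ s = 1) ∨ (r = 2 ∧ s = 3) ∨ (r = 3 ∧ s = 0) ∨
      (r = 3 ∧ s = 1) ∨ (r = 3 ∧ s = 2)) r s hrs
    rcases hrs12 with ⟨rfl, rfl⟩ | ⟨rfl, rfl⟩ | ⟨rfl, rfl⟩ | ⟨rfl, rfl⟩ | ⟨rfl, rfl⟩ |
      ⟨rfl, rfl⟩ | ⟨rfl, rfl⟩ | ⟨rfl, rfl⟩ | ⟨rfl, rfl⟩ | ⟨rfl, rfl⟩ | ⟨rfl, rfl⟩ | ⟨rfl, rfl⟩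
    · exact Or.inl hcast
    · exact Or.inr (Or.inl hcast)
    · exact Or.inr (Or.inr hcast)
    · rw [e10] at hcast; exact Or.inl hcast
    · rw [q03]; exact Or.inr (Or.inr hcast)
    · rw [q02]; exact Or.inr (Or.inl hcast)
    · rw [e20] at hcast; exact Or.inr (Or.inl hcast)
    · rw [e21] at hcast; rw [q03]; exact Or.inr (Or.inr hcast)
    · rw [q01]; exact Or.inl hcast
    · rw [e30] at hcast; exact Or.inr (Or.inr hcast)
    · rw [e31] at hcast; rw [q02]; exact Or.inr (Or.inl hcast)
    · rw [e32] at hcast; rw [q01]; exact Or.inl hcast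
  rcases hσ0 with rfl | rfl | rfl | rfl | rfl | rfl <;>
    rcases hmem with hmm | hmm | hmm <;>
    linarith [r1, r2, r3, r4, r5, r6, q01, q02, q03, htot, hb1, hb2, hb3,
      hm1, hm2, hm3, homega, hρeq]
end

section
/- Let (Γ,γ) be a 5-colored graph of order 2p. Then ω_G(Γ) = 3·( 6(p−1) − Σ_{{r,s}}(g_{rs} − 1) ), the sum over the ten unordered pairs of distinct colors in Δ₄. If moreover Γ represents a singular 4-manifold — i.e. every connected component Ξ (of order 2q_Ξ) of every 3-residue Γ_{{i,j,k}} satisfies g_{ij}(Ξ) + g_{ik}(Ξ) + g_{jk}(Ξ) = q_Ξ + 2 — then also ω_G(Γ) = 8(p−1) − 2·Σ_{{r,s,t}}(g_{rst} − 1), the sum over the ten unordered triples of distinct colors in Δ₄. -/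
namespace CGraph

/-- A 5-colored graph represents a singular 4-manifold iff every connected component `Ξ`
(of order `2q_Ξ`) of every 3-residue `Γ_{{i,j,k}}` satisfies
`g_{ij}(Ξ) + g_{ik}(Ξ) + g_{jk}(Ξ) = q_Ξ + 2` (i.e. every 3-residue represents the 2-sphere).
Here the component of `Γ_{{i,j,k}}` containing a vertex `v0` has vertex set
`{w // (Γ_{{i,j,k}}).reach v0 w}`, and the pair `{i,j}` of its colors is the subset
`{c | c.val = i ∨ c.val = j}` of its color set `{i,j,k}`. -/
def SingularCond {V : Type} (G : CGraph (Fin 5) V) : Prop :=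
  ∀ i j k : Fin 5, i ≠ j → i ≠ k → j ≠ k → ∀ v0 : V,
    ((((G.restrict {i, j, k}).component v0).g {c | c.val = i ∨ c.val = j} : ℚ) +
        (((G.restrict {i, j, k}).component v0).g {c | c.val = i ∨ c.val = k} : ℚ) +
        (((G.restrict {i, j, k}).component v0).g {c | c.val = j ∨ c.val = k} : ℚ)) =
      (Nat.card {w : V // (G.restrict ({i, j, k} : Set (Fin 5))).reach v0 w} : ℚ) / 2 + 2

end CGraph


/-! ### Auxiliary machinery -/

section Aux

open Relation

private lemma nat_card_fiber {α β : Type} [Finite α] [Finite β] (f : α → β) :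
    Nat.card α = ∑ᶠ b : β, Nat.card {a // f a = b} := by
  classical
  letI := Fintype.ofFinite α
  letI := Fintype.ofFinite β
  rw [finsum_eq_sum_of_fintype, Nat.card_eq_fintype_card,
    Fintype.card_congr (Equiv.sigmaFiberEquiv f).symm, Fintype.card_sigma]
  exact Finset.sum_congr rfl fun b _ => (Nat.card_eq_fintype_card).symm

private lemma eqvGen_down {α : Type} {p : α → Prop} (r : α → α → Prop) {x y : {a // p a}}
    (h : EqvGen (fun a b : {a // p a} => r a.val b.val) x y) : EqvGen r x.val y.val := by
  induction h with
  | rel a b hab => exact .rel _ _ hab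
  | refl a => exact .refl _
  | symm a b _ ih => exact .symm _ _ ih
  | trans a b c _ _ ih1 ih2 => exact .trans _ _ _ ih1 ih2

private lemma eqvGen_up {α : Type} {r t : α → α → Prop} (hrt : ∀ a b, r a b → t a b) {z : α}
    {v w : α} (h : EqvGen r v w) :
    ∀ (hv : EqvGen t z v) (hw : EqvGen t z w),
      EqvGen (fun a b : {x // EqvGen t z x} => r a.val b.val) ⟨v, hv⟩ ⟨w, hw⟩ := by
  induction h with
  | rel a b hab => intro hv hw; exact .rel _ _ hab
  | refl a => intro hv hw; exact .refl _
  | symm a b _ ih => intro hv hw; exact .symm _ _ (ih hw hv)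
  | trans a b c hab hbc ih1 ih2 =>
      intro hv hw
      have hb : EqvGen t z b := .trans _ _ _ hv (hab.mono hrt)
      exact .trans _ _ _ (ih1 hv hb) (ih2 hb hw)

private lemma card_quot_eq_sum {α : Type} [Finite α] (r t : α → α → Prop)
    (hrt : ∀ a b, r a b → t a b) :
    Nat.card (Quotient (EqvGen.setoid r)) =
      ∑ᶠ q : Quotient (EqvGen.setoid t),
        Nat.card (Quotient (EqvGen.setoid
          (fun a b : {x // EqvGen t (Quotient.out q) x} => r a.val b.val))) := by
  classical
  set F : Quotient (EqvGen.setoid r) → Quotient (EqvGen.setoid t) :=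
    Quotient.map id (fun a b h => Relation.EqvGen.mono hrt a b h) with hF
  rw [nat_card_fiber F]
  refine finsum_congr fun q => ?_
  have hmk : ∀ w : {x // EqvGen t (Quotient.out q) x},
      F (Quotient.mk (EqvGen.setoid r) w.val) = q := by
    intro w
    show Quotient.mk (EqvGen.setoid t) (id w.val) = q
    exact Quotient.mk_eq_iff_out.mpr (EqvGen.symm _ _ w.property)
  have hwd : ∀ a b : {x // EqvGen t (Quotient.out q) x},
      EqvGen (fun a b : {x // EqvGen t (Quotient.out q) x} => r a.val b.val) a b →
      (⟨Quotient.mk (EqvGen.setoid r) a.val, hmk a⟩ : {x // F x = q}) =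
        ⟨Quotient.mk _ b.val, hmk b⟩ := by
    intro a b hab
    exact Subtype.ext (Quotient.sound (eqvGen_down r hab))
  set e : Quotient (EqvGen.setoid
      (fun a b : {x // EqvGen t (Quotient.out q) x} => r a.val b.val)) → {x // F x = q} :=
    Quotient.lift (fun w => (⟨Quotient.mk (EqvGen.setoid r) w.val, hmk w⟩ : {x // F x = q})) hwd
    with he
  have hbij : Function.Bijective e := by
    constructor
    · rintro ⟨a⟩ ⟨b⟩ hab
      have : Quotient.mk (EqvGen.setoid r) a.val = Quotient.mk _ b.val :=
        congrArg Subtype.val hab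
      exact Quotient.sound (eqvGen_up hrt (Quotient.exact this) a.property b.property)
    · rintro ⟨x, hx⟩
      obtain ⟨v, rfl⟩ := Quotient.exists_rep x
      have hv : EqvGen t (Quotient.out q) v := by
        have : Quotient.mk (EqvGen.setoid t) v = q := hx
        exact EqvGen.symm _ _ (Quotient.mk_eq_iff_out.mp this)
      exact ⟨Quotient.mk _ (⟨v, hv⟩ : {x // EqvGen t (Quotient.out q) x}), rfl⟩
  exact (Nat.card_congr (Equiv.ofBijective e hbij)).symm

private lemma card_eq_sum_comp {α : Type} [Finite α] (t : α → α → Prop) :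
    Nat.card α = ∑ᶠ q : Quotient (EqvGen.setoid t),
        Nat.card {x // EqvGen t (Quotient.out q) x} := by
  classical
  rw [nat_card_fiber (Quotient.mk (EqvGen.setoid t))]
  refine finsum_congr fun q => ?_
  refine Nat.card_congr (Equiv.subtypeEquivRight fun a => ?_)
  constructor
  · intro h; exact EqvGen.symm _ _ (Quotient.mk_eq_iff_out.mp h)
  · intro h; exact Quotient.mk_eq_iff_out.mpr (EqvGen.symm _ _ h)

/-- fast decidable test for being a `5`-cycle: the orbit of `0` is everything -/
private def Cyc5 (σ : Equiv.Perm (Fin 5)) : Prop := ∀ y : Fin 5, ∃ n : Fin 5, (σ ^ (n : ℕ)) 0 = y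

private instance : DecidablePred Cyc5 := fun _ => Fintype.decidableForallFintype

private theorem cyc5_iff (σ : Equiv.Perm (Fin 5)) : Cyc5 σ ↔ CGraph.IsCyclicPerm σ := by
  constructor
  · intro h
    have hinj : Function.Injective (fun n : Fin 5 => (σ ^ (n : ℕ)) 0) :=
      Finite.injective_iff_surjective.mpr h
    have hσ0 : σ 0 ≠ 0 := by
      intro hfix
      have : (fun n : Fin 5 => (σ ^ (n : ℕ)) 0) 1 = (fun n : Fin 5 => (σ ^ (n : ℕ)) 0) 0 := by
        simp [pow_one, hfix]
      exact absurd (hinj this) (by decide)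
    have hnofix : ∀ c, σ c ≠ c := by
      intro c hfix
      obtain ⟨n, hn⟩ := h c
      have hall : ∀ m : ℕ, (σ ^ m) c = c := by
        intro m; induction m with
        | zero => simp
        | succ k ih => rw [pow_succ, Equiv.Perm.mul_apply, hfix, ih]
      have h0c : (σ ^ (n : ℕ)) 0 = (σ ^ (n : ℕ)) c := by rw [hn, hall]
      have : (0 : Fin 5) = c := Equiv.injective _ h0c
      rw [← this] at hfix; exact hσ0 hfix
    refine ⟨⟨0, hσ0, ?_⟩, hnofix⟩
    intro y _
    obtain ⟨n, hn⟩ := h y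
    exact ⟨(n : ℕ), by rw [zpow_natCast]; exact hn⟩
  · rintro ⟨hcyc, hnofix⟩
    intro y
    obtain ⟨x, hx, hsc⟩ := hcyc
    have h0 : σ.SameCycle 0 y := ((hsc (hnofix 0)).symm.trans (hsc (hnofix y)))
    obtain ⟨i, hi, hiy⟩ := h0.exists_pow_eq'
    have hord : orderOf σ ≤ 5 := by
      rw [Equiv.Perm.IsCycle.orderOf ⟨x, hx, hsc⟩]
      simpa using Finset.card_le_univ σ.support
    exact ⟨⟨i, lt_of_lt_of_le hi hord⟩, hiy⟩

private instance : DecidablePred (CGraph.IsCyclicPerm (C := Fin 5)) := fun σ =>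
  decidable_of_iff _ (cyc5_iff σ)

private lemma sum_ite_card {α : Type} (S : Finset α)
    (p : α → Prop) [DecidablePred p] (x : ℚ) :
    (∑ a ∈ S, if p a then x else 0) = (S.filter p).card * x := by
  rw [← Finset.sum_filter, Finset.sum_const, nsmul_eq_mul]

private lemma inner_count (x : Fin 5 → Fin 5 → ℚ) (cond : Fin 5 → Fin 5 → Fin 5 → Prop)
    [∀ a b c, Decidable (cond a b c)]
    (hcard : ∀ a b, (Finset.univ.filter (cond a b)).card = if a = b then 0 else 3) :
    (∑ a : Fin 5, ∑ b : Fin 5, ∑ c : Fin 5, if cond a b c then x a b else 0)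
      = 3 * ∑ a : Fin 5, ∑ b : Fin 5, if a = b then 0 else x a b := by
  rw [Finset.mul_sum]
  refine Finset.sum_congr rfl fun a _ => ?_
  rw [Finset.mul_sum]
  refine Finset.sum_congr rfl fun b _ => ?_
  rw [sum_ite_card, hcard]
  by_cases h : a = b <;> simp [h]

/-- master formula: `ω_G = (24(2+3p) - 6·Σ_{ordered pairs} g_{rs})/4` -/
private lemma omega_formula {p : ℕ} {V : Type} [Finite V] (G : CGraph (Fin 5) V)
    (hconn : G.Conn) (horder : Nat.card V = 2 * p) :
    G.omegaG = (24 * (2 + 3 * (p : ℚ)) -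
      6 * ∑ r : Fin 5, ∑ s : Fin 5, (if r = s then 0 else (G.g {r, s} : ℚ))) / 4 := by
  classical
  have hc1 : G.g Set.univ = 1 := hconn
  have hfin : G.omegaG =
      (∑ σ ∈ Finset.univ.filter (CGraph.IsCyclicPerm (C := Fin 5)), G.rho σ) / 2 := by
    unfold CGraph.omegaG
    congr 1
    rw [finsum_eq_sum_of_fintype]
    exact (Finset.sum_subtype _ (fun σ => by simp) _).symm
  have hrho : ∀ σ : Equiv.Perm (Fin 5),
      G.rho σ = (2 + 3 * (p : ℚ) - ∑ c : Fin 5, (G.g {c, σ c} : ℚ)) / 2 := by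
    intro σ
    unfold CGraph.rho CGraph.chi
    rw [hc1, finsum_eq_sum_of_fintype, horder]
    have h5 : (Nat.card (Fin 5) : ℚ) = 5 := by simp
    rw [h5]
    push_cast
    ring
  have h24 : (Finset.univ.filter (CGraph.IsCyclicPerm (C := Fin 5))).card = 24 := by decide
  have hcount : ∀ c s : Fin 5,
      ((Finset.univ.filter (CGraph.IsCyclicPerm (C := Fin 5))).filter fun σ => s = σ c).card
        = if c = s then 0 else 6 := by decide
  have hpair : ∑ σ ∈ Finset.univ.filter (CGraph.IsCyclicPerm (C := Fin 5)),
      ∑ c : Fin 5, (G.g {c, σ c} : ℚ)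
      = 6 * ∑ r : Fin 5, ∑ s : Fin 5, (if r = s then 0 else (G.g {r, s} : ℚ)) := by
    rw [Finset.sum_comm, Finset.mul_sum]
    refine Finset.sum_congr rfl fun c _ => ?_
    calc ∑ σ ∈ Finset.univ.filter (CGraph.IsCyclicPerm (C := Fin 5)), (G.g {c, σ c} : ℚ)
        = ∑ σ ∈ Finset.univ.filter (CGraph.IsCyclicPerm (C := Fin 5)),
            ∑ s : Fin 5, (if s = σ c then (G.g {c, s} : ℚ) else 0) := by
          refine Finset.sum_congr rfl fun σ _ => ?_
          rw [Finset.sum_ite_eq']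
          simp
      _ = ∑ s : Fin 5, ∑ σ ∈ Finset.univ.filter (CGraph.IsCyclicPerm (C := Fin 5)),
            (if s = σ c then (G.g {c, s} : ℚ) else 0) := Finset.sum_comm
      _ = ∑ s : Fin 5,
            (((Finset.univ.filter (CGraph.IsCyclicPerm (C := Fin 5))).filter
                fun σ => s = σ c).card : ℚ) * (G.g {c, s} : ℚ) := by
          refine Finset.sum_congr rfl fun s _ => ?_
          rw [sum_ite_card]
      _ = 6 * ∑ s : Fin 5, (if c = s then 0 else (G.g {c, s} : ℚ)) := by
          rw [Finset.mul_sum]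
          refine Finset.sum_congr rfl fun s _ => ?_
          rw [hcount]
          by_cases h : c = s <;> simp [h]
  rw [hfin, Finset.sum_congr rfl (fun σ _ => hrho σ), ← Finset.sum_div,
    Finset.sum_sub_distrib, Finset.sum_const, h24, hpair]
  ring

/-- consequence of the singular condition, summed over the components of a `3`-residue -/
private lemma pair_triple_rel {p : ℕ} {V : Type} [Finite V] (G : CGraph (Fin 5) V)
    (horder : Nat.card V = 2 * p) (hsing : G.SingularCond) (i j k : Fin 5)
    (hij : i ≠ j) (hik : i ≠ k) (hjk : j ≠ k) :
    (G.g {i, j} : ℚ) + (G.g {i, k} : ℚ) + (G.g {j, k} : ℚ)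
      = (p : ℚ) + 2 * (G.g {i, j, k} : ℚ) := by
  classical
  set T : Set (Fin 5) := {i, j, k} with hT
  have hiT : i ∈ T := Set.mem_insert _ _
  have hjT : j ∈ T := Set.mem_insert_of_mem _ (Set.mem_insert _ _)
  have hkT : k ∈ T := Set.mem_insert_of_mem _ (Set.mem_insert_of_mem _ rfl)
  set tt : V → V → Prop := (fun v w => ∃ c, (G.restrict T).inv c v = w) with htt
  letI : Fintype (Quotient (EqvGen.setoid tt)) := Fintype.ofFinite _
  set r2 : Fin 5 → Fin 5 → V → V → Prop :=
    (fun a b v w => ∃ c ∈ ({a, b} : Set (Fin 5)), G.inv c v = w) with hr2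
  have hsubrel : ∀ a b : Fin 5, a ∈ T → b ∈ T → ∀ v w, r2 a b v w → tt v w := by
    rintro a b ha hb v w ⟨c, hc, h⟩
    rcases Set.mem_insert_iff.mp hc with rfl | hc
    · exact ⟨⟨c, ha⟩, h⟩
    · rw [Set.mem_singleton_iff.mp hc] at h
      exact ⟨⟨b, hb⟩, h⟩
  have hcomp : ∀ (a b : Fin 5), a ∈ T → b ∈ T → ∀ q : Quotient (EqvGen.setoid tt),
      (((G.restrict T).component q.out).g {c | c.val = a ∨ c.val = b})
        = Nat.card (Quotient (EqvGen.setoid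
            (fun v w : {x // EqvGen tt q.out x} => r2 a b v.val w.val))) := by
    intro a b ha hb q
    show Nat.card (Quotient (EqvGen.setoid
        (fun v w : {x // EqvGen tt q.out x} =>
          ∃ c ∈ {c : T | c.val = a ∨ c.val = b},
            ((G.restrict T).component q.out).inv c v = w))) = _
    have hrel : (fun v w : {x // EqvGen tt q.out x} =>
          ∃ c ∈ {c : T | c.val = a ∨ c.val = b},
            ((G.restrict T).component q.out).inv c v = w)
        = fun v w => r2 a b v.val w.val := by
      funext v w
      apply propext
      constructor
      · rintro ⟨c, hcmem, hcinv⟩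
        refine ⟨c.val, ?_, congrArg Subtype.val hcinv⟩
        rcases hcmem with h | h
        · rw [h]; exact Set.mem_insert _ _
        · rw [h]; exact Set.mem_insert_of_mem _ rfl
      · rintro ⟨c, hcmem, hcinv⟩
        rcases Set.mem_insert_iff.mp hcmem with rfl | hc
        · exact ⟨⟨c, ha⟩, Or.inl rfl, Subtype.ext hcinv⟩
        · rw [Set.mem_singleton_iff.mp hc] at hcinv
          exact ⟨⟨b, hb⟩, Or.inr rfl, Subtype.ext hcinv⟩
    rw [hrel]
  have hA : ∀ a b : Fin 5, a ∈ T → b ∈ T →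
      (G.g {a, b} : ℚ) = ∑ q : Quotient (EqvGen.setoid tt),
        ((((G.restrict T).component q.out).g {c | c.val = a ∨ c.val = b} : ℚ)) := by
    intro a b ha hb
    have h1 : G.g {a, b} = ∑ q : Quotient (EqvGen.setoid tt),
        (((G.restrict T).component q.out).g {c | c.val = a ∨ c.val = b}) := by
      have := card_quot_eq_sum (r2 a b) tt (hsubrel a b ha hb)
      rw [finsum_eq_sum_of_fintype] at this
      rw [show G.g {a, b} = Nat.card (Quotient (EqvGen.setoid (r2 a b))) from rfl, this]
      exact Finset.sum_congr rfl fun q _ => (hcomp a b ha hb q).symm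
    rw [h1]
    push_cast
    rfl
  have hV : (Nat.card V : ℚ) = ∑ q : Quotient (EqvGen.setoid tt),
      ((Nat.card {w : V // (G.restrict T).reach q.out w} : ℚ)) := by
    have := card_eq_sum_comp tt
    rw [finsum_eq_sum_of_fintype] at this
    rw [this]
    push_cast
    exact Finset.sum_congr rfl fun q _ => rfl
  have hQ : (G.g {i, j, k} : ℚ) = (Fintype.card (Quotient (EqvGen.setoid tt)) : ℚ) := by
    have hrel : (fun v w : V => ∃ c ∈ ({i, j, k} : Set (Fin 5)), G.inv c v = w) = tt := by
      funext v w
      apply propext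
      constructor
      · rintro ⟨c, hc, h⟩; exact ⟨⟨c, hc⟩, h⟩
      · rintro ⟨c, h⟩; exact ⟨c.val, c.property, h⟩
    have : G.g {i, j, k} = Nat.card (Quotient (EqvGen.setoid tt)) := by
      show Nat.card (Quotient (EqvGen.setoid
        (fun v w : V => ∃ c ∈ ({i, j, k} : Set (Fin 5)), G.inv c v = w))) = _
      rw [hrel]
    rw [this, Nat.card_eq_fintype_card]
  calc (G.g {i, j} : ℚ) + (G.g {i, k} : ℚ) + (G.g {j, k} : ℚ)
      = ∑ q : Quotient (EqvGen.setoid tt),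
          ((((G.restrict T).component q.out).g {c | c.val = i ∨ c.val = j} : ℚ) +
            (((G.restrict T).component q.out).g {c | c.val = i ∨ c.val = k} : ℚ) +
            (((G.restrict T).component q.out).g {c | c.val = j ∨ c.val = k} : ℚ)) := by
        rw [hA i j hiT hjT, hA i k hiT hkT, hA j k hjT hkT,
          ← Finset.sum_add_distrib, ← Finset.sum_add_distrib]
    _ = ∑ q : Quotient (EqvGen.setoid tt),
          ((Nat.card {w : V // (G.restrict T).reach q.out w} : ℚ) / 2 + 2) :=
        Finset.sum_congr rfl fun q _ => hsing i j k hij hik hjk q.out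
    _ = (p : ℚ) + 2 * (G.g {i, j, k} : ℚ) := by
        rw [Finset.sum_add_distrib, Finset.sum_const, ← Finset.sum_div, ← hV, horder,
          Finset.card_univ, hQ]
        push_cast
        ring

end Aux

open CGraph in
/-- Theorem `G-degree(n=4)`, first and second relations: for a 5-colored
graph of order `2p`, `ω_G(Γ) = 3·(6(p−1) − Σ_{{r,s}}(g_{rs} − 1))`; if moreover `Γ` represents
a singular 4-manifold, then also `ω_G(Γ) = 8(p−1) − 2·Σ_{{r,s,t}}(g_{rst} − 1)` (unordered pair
and triple sums written as ordered sums divided by 2 resp. 6). -/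
theorem stmt13 {p : ℕ} {V : Type} [Finite V]
    (G : CGraph (Fin 5) V) (hconn : G.Conn) (horder : Nat.card V = 2 * p) :
    G.omegaG = 3 * (6 * ((p : ℚ) - 1) -
        (∑ r : Fin 5, ∑ s : Fin 5, if r = s then 0 else (G.g {r, s} : ℚ) - 1) / 2) ∧
      (G.SingularCond →
        G.omegaG = 8 * ((p : ℚ) - 1) -
          2 * ((∑ r : Fin 5, ∑ s : Fin 5, ∑ t : Fin 5,
            if r ≠ s ∧ r ≠ t ∧ s ≠ t then (G.g {r, s, t} : ℚ) - 1 else 0) / 6)) := by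
  classical
  have homega := omega_formula G hconn horder
  have h20 : (∑ r : Fin 5, ∑ s : Fin 5, if r = s then (0:ℚ) else 1) = 20 := by
    have h := congrArg (Nat.cast : ℕ → ℚ)
      (by decide : (∑ r : Fin 5, ∑ s : Fin 5, if r = s then (0:ℕ) else 1) = 20)
    simpa [apply_ite (Nat.cast : ℕ → ℚ)] using h
  have hshift : (∑ r : Fin 5, ∑ s : Fin 5, if r = s then (0:ℚ) else (G.g {r, s} : ℚ) - 1)
      = (∑ r : Fin 5, ∑ s : Fin 5, if r = s then (0:ℚ) else (G.g {r, s} : ℚ)) - 20 := by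
    have hpt : ∀ r s : Fin 5, (if r = s then (0:ℚ) else (G.g {r, s} : ℚ) - 1)
        = (if r = s then (0:ℚ) else (G.g {r, s} : ℚ)) - (if r = s then (0:ℚ) else 1) := by
      intro r s; split <;> ring
    simp_rw [hpt, Finset.sum_sub_distrib]
    rw [h20]
  constructor
  · rw [hshift, homega]
    ring
  · intro hsing
    have key := pair_triple_rel G horder hsing
    have h60 : (∑ r : Fin 5, ∑ s : Fin 5, ∑ t : Fin 5,
        if r ≠ s ∧ r ≠ t ∧ s ≠ t then (1:ℚ) else 0) = 60 := by
      have h := congrArg (Nat.cast : ℕ → ℚ)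
        (by decide : (∑ r : Fin 5, ∑ s : Fin 5, ∑ t : Fin 5,
          if r ≠ s ∧ r ≠ t ∧ s ≠ t then (1:ℕ) else 0) = 60)
      simpa [apply_ite (Nat.cast : ℕ → ℚ)] using h
    have htrishift : (∑ r : Fin 5, ∑ s : Fin 5, ∑ t : Fin 5,
          if r ≠ s ∧ r ≠ t ∧ s ≠ t then (G.g {r, s, t} : ℚ) - 1 else 0)
        = (∑ r : Fin 5, ∑ s : Fin 5, ∑ t : Fin 5,
          if r ≠ s ∧ r ≠ t ∧ s ≠ t then (G.g {r, s, t} : ℚ) else 0) - 60 := by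
      have hpt : ∀ r s t : Fin 5,
          (if r ≠ s ∧ r ≠ t ∧ s ≠ t then (G.g {r, s, t} : ℚ) - 1 else 0)
          = (if r ≠ s ∧ r ≠ t ∧ s ≠ t then (G.g {r, s, t} : ℚ) else 0)
            - (if r ≠ s ∧ r ≠ t ∧ s ≠ t then (1:ℚ) else 0) := by
        intro r s t; split <;> ring
      simp_rw [hpt, Finset.sum_sub_distrib]
      rw [h60]
    have hc1 : ∀ a b : Fin 5,
        (Finset.univ.filter (fun c => a ≠ b ∧ a ≠ c ∧ b ≠ c)).card
          = if a = b then 0 else 3 := by decide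
    have hc2 : ∀ a b : Fin 5,
        (Finset.univ.filter (fun c => a ≠ c ∧ a ≠ b ∧ c ≠ b)).card
          = if a = b then 0 else 3 := by decide
    have hc3 : ∀ a b : Fin 5,
        (Finset.univ.filter (fun c => c ≠ a ∧ c ≠ b ∧ a ≠ b)).card
          = if a = b then 0 else 3 := by decide
    have hE1 : (∑ r : Fin 5, ∑ s : Fin 5, ∑ t : Fin 5,
          if r ≠ s ∧ r ≠ t ∧ s ≠ t then (G.g {r, s} : ℚ) else 0)
        = 3 * ∑ r : Fin 5, ∑ s : Fin 5, if r = s then (0:ℚ) else (G.g {r, s} : ℚ) :=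
      inner_count (fun a b => (G.g {a, b} : ℚ)) (fun a b c => a ≠ b ∧ a ≠ c ∧ b ≠ c) hc1
    have hE2 : (∑ r : Fin 5, ∑ s : Fin 5, ∑ t : Fin 5,
          if r ≠ s ∧ r ≠ t ∧ s ≠ t then (G.g {r, t} : ℚ) else 0)
        = 3 * ∑ r : Fin 5, ∑ s : Fin 5, if r = s then (0:ℚ) else (G.g {r, s} : ℚ) := by
      have hsw : (∑ r : Fin 5, ∑ s : Fin 5, ∑ t : Fin 5,
            if r ≠ s ∧ r ≠ t ∧ s ≠ t then (G.g {r, t} : ℚ) else 0)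
          = ∑ r : Fin 5, ∑ t : Fin 5, ∑ s : Fin 5,
            if r ≠ s ∧ r ≠ t ∧ s ≠ t then (G.g {r, t} : ℚ) else 0 :=
        Finset.sum_congr rfl fun r _ => Finset.sum_comm
      rw [hsw]
      exact inner_count (fun a b => (G.g {a, b} : ℚ)) (fun a b c => a ≠ c ∧ a ≠ b ∧ c ≠ b) hc2
    have hE3 : (∑ r : Fin 5, ∑ s : Fin 5, ∑ t : Fin 5,
          if r ≠ s ∧ r ≠ t ∧ s ≠ t then (G.g {s, t} : ℚ) else 0)
        = 3 * ∑ r : Fin 5, ∑ s : Fin 5, if r = s then (0:ℚ) else (G.g {r, s} : ℚ) := by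
      have hsw1 : (∑ r : Fin 5, ∑ s : Fin 5, ∑ t : Fin 5,
            if r ≠ s ∧ r ≠ t ∧ s ≠ t then (G.g {s, t} : ℚ) else 0)
          = ∑ s : Fin 5, ∑ r : Fin 5, ∑ t : Fin 5,
            if r ≠ s ∧ r ≠ t ∧ s ≠ t then (G.g {s, t} : ℚ) else 0 := Finset.sum_comm
      have hsw2 : (∑ s : Fin 5, ∑ r : Fin 5, ∑ t : Fin 5,
            if r ≠ s ∧ r ≠ t ∧ s ≠ t then (G.g {s, t} : ℚ) else 0)
          = ∑ s : Fin 5, ∑ t : Fin 5, ∑ r : Fin 5,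
            if r ≠ s ∧ r ≠ t ∧ s ≠ t then (G.g {s, t} : ℚ) else 0 :=
        Finset.sum_congr rfl fun s _ => Finset.sum_comm
      rw [hsw1, hsw2]
      exact inner_count (fun a b => (G.g {a, b} : ℚ)) (fun a b c => c ≠ a ∧ c ≠ b ∧ a ≠ b) hc3
    have htri : (∑ r : Fin 5, ∑ s : Fin 5, ∑ t : Fin 5,
          if r ≠ s ∧ r ≠ t ∧ s ≠ t then
            ((G.g {r, s} : ℚ) + (G.g {r, t} : ℚ) + (G.g {s, t} : ℚ)) else 0)
        = ∑ r : Fin 5, ∑ s : Fin 5, ∑ t : Fin 5,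
          if r ≠ s ∧ r ≠ t ∧ s ≠ t then ((p : ℚ) + 2 * (G.g {r, s, t} : ℚ)) else 0 := by
      refine Finset.sum_congr rfl fun r _ => Finset.sum_congr rfl fun s _ =>
        Finset.sum_congr rfl fun t _ => ?_
      by_cases hd : r ≠ s ∧ r ≠ t ∧ s ≠ t
      · rw [if_pos hd, if_pos hd]
        exact key r s t hd.1 hd.2.1 hd.2.2
      · rw [if_neg hd, if_neg hd]
    have hL : (∑ r : Fin 5, ∑ s : Fin 5, ∑ t : Fin 5,
          if r ≠ s ∧ r ≠ t ∧ s ≠ t then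
            ((G.g {r, s} : ℚ) + (G.g {r, t} : ℚ) + (G.g {s, t} : ℚ)) else 0)
        = 9 * ∑ r : Fin 5, ∑ s : Fin 5, if r = s then (0:ℚ) else (G.g {r, s} : ℚ) := by
      have hpt : ∀ r s t : Fin 5,
          (if r ≠ s ∧ r ≠ t ∧ s ≠ t then
            ((G.g {r, s} : ℚ) + (G.g {r, t} : ℚ) + (G.g {s, t} : ℚ)) else 0)
          = (if r ≠ s ∧ r ≠ t ∧ s ≠ t then (G.g {r, s} : ℚ) else 0)
            + (if r ≠ s ∧ r ≠ t ∧ s ≠ t then (G.g {r, t} : ℚ) else 0)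
            + (if r ≠ s ∧ r ≠ t ∧ s ≠ t then (G.g {s, t} : ℚ) else 0) := by
        intro r s t; split <;> ring
      simp_rw [hpt, Finset.sum_add_distrib]
      rw [hE1, hE2, hE3]
      ring
    have hR : (∑ r : Fin 5, ∑ s : Fin 5, ∑ t : Fin 5,
          if r ≠ s ∧ r ≠ t ∧ s ≠ t then ((p : ℚ) + 2 * (G.g {r, s, t} : ℚ)) else 0)
        = 60 * (p : ℚ) + 2 * ∑ r : Fin 5, ∑ s : Fin 5, ∑ t : Fin 5,
            (if r ≠ s ∧ r ≠ t ∧ s ≠ t then (G.g {r, s, t} : ℚ) else 0) := by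
      have hpt : ∀ r s t : Fin 5,
          (if r ≠ s ∧ r ≠ t ∧ s ≠ t then ((p : ℚ) + 2 * (G.g {r, s, t} : ℚ)) else 0)
          = (p : ℚ) * (if r ≠ s ∧ r ≠ t ∧ s ≠ t then (1:ℚ) else 0)
            + 2 * (if r ≠ s ∧ r ≠ t ∧ s ≠ t then (G.g {r, s, t} : ℚ) else 0) := by
        intro r s t; split <;> ring
      simp_rw [hpt, Finset.sum_add_distrib, ← Finset.mul_sum]
      rw [h60]
      ring
    have hrel : 9 * (∑ r : Fin 5, ∑ s : Fin 5, if r = s then (0:ℚ) else (G.g {r, s} : ℚ))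
        = 60 * (p : ℚ) + 2 * ∑ r : Fin 5, ∑ s : Fin 5, ∑ t : Fin 5,
            (if r ≠ s ∧ r ≠ t ∧ s ≠ t then (G.g {r, s, t} : ℚ) else 0) := by
      rw [← hL, htri, hR]
    rw [htrishift, homega]
    linarith [hrel]
end
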